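/- arXiv:2512.07550 — 7 statements merged into one kernel-verified Lean document; each statement's English description precedes it below -/
import Mathlib

section
/- Strong duality for finite Wasserstein distributionally robust linear objectives: let X be a finite set, d a metric on X, P a probability vector on X, v : X → ℝ any function, and δ ≥ 0. Then sup over all probability vectors Q on X with W(Q,P) ≤ δ of Σ_{y∈X} v(y) Q(y) equals inf over λ ≥ 0 of [ λδ + Σ_{y∈X} ( max_{l∈X} ( −λ d(l,y) + v(l) ) ) P(y) ]. -/
open Finset

/-- A probability vector on a finite set `X`. -/
def IsProbVec {X : Type*} [Fintype X] (μ : X → ℝ) : Prop :=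
  (∀ x, 0 ≤ μ x) ∧ ∑ x, μ x = 1

/-- A coupling of two probability vectors on a finite set `X`. -/
def IsCoupling {X : Type*} [Fintype X] (μ ν : X → ℝ) (Γ : X × X → ℝ) : Prop :=
  (∀ p, 0 ≤ Γ p) ∧ (∀ y, ∑ z, Γ (y, z) = μ y) ∧ (∀ z, ∑ y, Γ (y, z) = ν z)

/-- `d` is a metric on `X`. -/
def IsMetricOn {X : Type*} (d : X → X → ℝ) : Prop :=
  (∀ x y, 0 ≤ d x y) ∧ (∀ x y, d x y = 0 ↔ x = y) ∧ (∀ x y, d x y = d y x) ∧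
    (∀ x y z, d x z ≤ d x y + d y z)

/-- The 1-Wasserstein distance between probability vectors on a finite set. -/
noncomputable def Wass {X : Type*} [Fintype X] (d : X → X → ℝ) (μ ν : X → ℝ) : ℝ :=
  sInf {c | ∃ Γ : X × X → ℝ, IsCoupling μ ν Γ ∧ c = ∑ p : X × X, Γ p * d p.1 p.2}

section aux
variable {X : Type*} [Fintype X] [Nonempty X]

noncomputable def mfun (d : X → X → ℝ) (v : X → ℝ) (lam : ℝ) (y : X) : ℝ :=
  Finset.univ.sup' Finset.univ_nonempty fun l => -lam * d l y + v l

lemma le_mfun (d : X → X → ℝ) (v : X → ℝ) (lam : ℝ) (y l : X) :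
    -lam * d l y + v l ≤ mfun d v lam y := by
  rw [mfun]; exact Finset.le_sup' (fun l => -lam * d l y + v l) (mem_univ l)

noncomputable def Aset (d : X → X → ℝ) (v : X → ℝ) (lam : ℝ) (y : X) : Finset X :=
  univ.filter fun l => -lam * d l y + v l = mfun d v lam y

lemma Aset_nonempty (d : X → X → ℝ) (v : X → ℝ) (lam : ℝ) (y : X) :
    (Aset d v lam y).Nonempty := by
  obtain ⟨l, -, hl⟩ := Finset.exists_mem_eq_sup' (univ_nonempty (α := X))
    fun l => -lam * d l y + v l
  exact ⟨l, mem_filter.2 ⟨mem_univ l, hl.symm⟩⟩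

lemma mem_Aset_iff {d : X → X → ℝ} {v : X → ℝ} {lam : ℝ} {y l : X} :
    l ∈ Aset d v lam y ↔ -lam * d l y + v l = mfun d v lam y := by
  simp [Aset]

noncomputable def cmin (d : X → X → ℝ) (v : X → ℝ) (lam : ℝ) (y : X) : ℝ :=
  (Aset d v lam y).inf' (Aset_nonempty d v lam y) fun l => d l y

noncomputable def cmax (d : X → X → ℝ) (v : X → ℝ) (lam : ℝ) (y : X) : ℝ :=
  (Aset d v lam y).sup' (Aset_nonempty d v lam y) fun l => d l y

lemma cmin_le_cmax (d : X → X → ℝ) (v : X → ℝ) (lam : ℝ) (y : X) :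
    cmin d v lam y ≤ cmax d v lam y := by
  obtain ⟨l, hl⟩ := Aset_nonempty d v lam y
  rw [cmin, cmax]
  exact le_trans (Finset.inf'_le (fun l => d l y) hl) (Finset.le_sup' (fun l => d l y) hl)

lemma cmin_nonneg (d : X → X → ℝ) (hd0 : ∀ x y, 0 ≤ d x y) (v : X → ℝ) (lam : ℝ) (y : X) :
    0 ≤ cmin d v lam y :=
  Finset.le_inf' _ _ fun l _ => hd0 l y

/-- Right stability: slightly above `lam`, all maximizers have distance ≥ `cmin lam`. -/
lemma right_stable (d : X → X → ℝ) (v : X → ℝ) (lam : ℝ) (y : X) :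
    ∃ η > 0, ∀ lam', lam < lam' → lam' < lam + η →
      ∀ l' ∈ Aset d v lam' y, cmin d v lam y ≤ d l' y := by
  classical
  obtain ⟨l0, hl0A, hl0⟩ := Finset.exists_mem_eq_inf' (Aset_nonempty d v lam y)
    (fun l => d l y)
  set B : Finset X := univ.filter fun l => d l y < cmin d v lam y with hB
  have hBgap : ∀ l ∈ B, -lam * d l y + v l < mfun d v lam y := by
    intro l hl
    rcases lt_or_eq_of_le (le_mfun d v lam y l) with h | h
    · exact h
    · exact absurd (Finset.inf'_le (fun l => d l y) (mem_Aset_iff.2 h))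
        (not_le.2 (mem_filter.1 hl).2)
  rcases B.eq_empty_or_nonempty with hBe | hBne
  · refine ⟨1, one_pos, fun lam' _ _ l' _ => ?_⟩
    by_contra h
    have : l' ∈ B := mem_filter.2 ⟨mem_univ l', not_le.1 h⟩
    simp [hBe] at this
  · refine ⟨B.inf' hBne fun l =>
      (mfun d v lam y - (-lam * d l y + v l)) / (cmin d v lam y - d l y), ?_, ?_⟩
    · rw [gt_iff_lt, Finset.lt_inf'_iff]
      intro l hl
      exact div_pos (by linarith [hBgap l hl]) (by linarith [(mem_filter.1 hl).2])
    · intro lam' h1 h2 l' hl'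
      by_contra h
      have hl'B : l' ∈ B := mem_filter.2 ⟨mem_univ l', not_le.1 h⟩
      have hlt : lam' - lam < (mfun d v lam y - (-lam * d l' y + v l')) /
          (cmin d v lam y - d l' y) :=
        lt_of_lt_of_le (by linarith) (Finset.inf'_le (fun l =>
          (mfun d v lam y - (-lam * d l y + v l)) / (cmin d v lam y - d l y)) hl'B)
      have hden : 0 < cmin d v lam y - d l' y := by linarith [(mem_filter.1 hl'B).2]
      have h4 : (lam' - lam) * (cmin d v lam y - d l' y) <
          mfun d v lam y - (-lam * d l' y + v l') := by
        rw [← lt_div_iff₀ hden]; exact hlt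
      have h1' : -lam' * d l' y + v l' = mfun d v lam' y := mem_Aset_iff.1 hl'
      have h5 : -lam' * d l0 y + v l0 ≤ mfun d v lam' y := le_mfun d v lam' y l0
      have h6 : -lam * d l0 y + v l0 = mfun d v lam y := mem_Aset_iff.1 hl0A
      have h7 : cmin d v lam y = d l0 y := hl0
      nlinarith [h4, h5, h6, h1', h7]

/-- Left stability: slightly below `lam`, some maximizer has distance ≤ `cmax lam`. -/
lemma left_stable (d : X → X → ℝ) (v : X → ℝ) (lam : ℝ) (y : X) :
    ∃ η > 0, ∀ lam', lam - η < lam' → lam' < lam →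
      cmin d v lam' y ≤ cmax d v lam y := by
  classical
  obtain ⟨l1, hl1A, hl1⟩ := Finset.exists_mem_eq_sup' (Aset_nonempty d v lam y)
    (fun l => d l y)
  have hl1' : cmax d v lam y = d l1 y := hl1
  set B : Finset X := univ.filter fun l => cmax d v lam y < d l y with hB
  have hBgap : ∀ l ∈ B, -lam * d l y + v l < mfun d v lam y := by
    intro l hl
    rcases lt_or_eq_of_le (le_mfun d v lam y l) with h | h
    · exact h
    · exact absurd (Finset.le_sup' (fun l => d l y) (mem_Aset_iff.2 h))
        (not_le.2 (mem_filter.1 hl).2)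
  have key : ∀ η, 0 < η → (∀ l ∈ B, η ≤ (mfun d v lam y - (-lam * d l y + v l)) /
      (d l y - cmax d v lam y)) → ∀ lam', lam - η < lam' → lam' < lam →
      cmin d v lam' y ≤ cmax d v lam y := by
    intro η hη hsmall lam' h1 h2
    have hl1mem : l1 ∈ Aset d v lam' y := by
      rw [mem_Aset_iff]
      refine le_antisymm (le_mfun d v lam' y l1) ?_
      obtain ⟨lw, -, hlw⟩ := Finset.exists_mem_eq_sup' (univ_nonempty (α := X))
        fun l => -lam' * d l y + v l
      rw [mfun, hlw]
      have h6 : -lam * d l1 y + v l1 = mfun d v lam y := mem_Aset_iff.1 hl1A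
      by_cases hc : d lw y ≤ cmax d v lam y
      · have h5 := le_mfun d v lam y lw
        nlinarith [mul_nonneg (by linarith : (0:ℝ) ≤ lam - lam')
          (by linarith : (0:ℝ) ≤ cmax d v lam y - d lw y)]
      · have hlwB : lw ∈ B := mem_filter.2 ⟨mem_univ lw, not_le.1 hc⟩
        have hden : 0 < d lw y - cmax d v lam y := by linarith [(mem_filter.1 hlwB).2]
        have hsm := hsmall lw hlwB
        have h4 : (lam - lam') * (d lw y - cmax d v lam y) <
            mfun d v lam y - (-lam * d lw y + v lw) := by
          calc (lam - lam') * (d lw y - cmax d v lam y)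
              < η * (d lw y - cmax d v lam y) :=
                mul_lt_mul_of_pos_right (by linarith) hden
            _ ≤ _ := (le_div_iff₀ hden).mp hsm
        nlinarith [h4, h6]
    calc cmin d v lam' y ≤ d l1 y := Finset.inf'_le _ hl1mem
      _ = cmax d v lam y := hl1'.symm
  rcases B.eq_empty_or_nonempty with hBe | hBne
  · refine ⟨1, one_pos, key 1 one_pos ?_⟩
    intro l hl; rw [hBe] at hl; exact absurd hl (notMem_empty l)
  · have hpos : (0:ℝ) < B.inf' hBne fun l =>
        (mfun d v lam y - (-lam * d l y + v l)) / (d l y - cmax d v lam y) := by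
      rw [Finset.lt_inf'_iff]
      intro l hl
      exact div_pos (by linarith [hBgap l hl]) (by linarith [(mem_filter.1 hl).2])
    exact ⟨_, hpos, key _ hpos fun l hl => Finset.inf'_le _ hl⟩

/-- Weak duality. -/
lemma weak_dual (d : X → X → ℝ) (hd0 : ∀ x y, 0 ≤ d x y)
    (P : X → ℝ) (hP : IsProbVec P) (v : X → ℝ) (δ : ℝ)
    (Q : X → ℝ) (hQ : IsProbVec Q) (hW : Wass d Q P ≤ δ)
    (lam : ℝ) (hlam : 0 ≤ lam) :
    ∑ y, v y * Q y ≤ lam * δ + ∑ y, mfun d v lam y * P y := by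
  apply le_of_forall_pos_le_add
  intro ε hε
  have hl1 : (0:ℝ) < lam + 1 := by linarith
  set ε2 := ε / (lam + 1) with hε2
  have hε2pos : 0 < ε2 := div_pos hε hl1
  have hCne : {c | ∃ Γ : X × X → ℝ, IsCoupling Q P Γ ∧
      c = ∑ p : X × X, Γ p * d p.1 p.2}.Nonempty := by
    refine ⟨_, fun p => Q p.1 * P p.2,
      ⟨fun p => mul_nonneg (hQ.1 p.1) (hP.1 p.2), ?_, ?_⟩, rfl⟩
    · intro y; show ∑ z, Q y * P z = Q y; rw [← Finset.mul_sum, hP.2, mul_one]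
    · intro z; show ∑ y, Q y * P z = P z; rw [← Finset.sum_mul, hQ.2, one_mul]
  have hW' : sInf {c | ∃ Γ : X × X → ℝ, IsCoupling Q P Γ ∧
      c = ∑ p : X × X, Γ p * d p.1 p.2} ≤ δ := hW
  obtain ⟨c, hcC, hclt⟩ := exists_lt_of_csInf_lt hCne
    (show sInf _ < δ + ε2 from lt_of_le_of_lt hW' (by linarith))
  obtain ⟨Γ, hΓ, rfl⟩ := hcC
  have step1 : ∑ y, v y * Q y = ∑ l, ∑ z, Γ (l, z) * v l := by
    refine Finset.sum_congr rfl fun l _ => ?_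
    rw [← hΓ.2.1 l, Finset.mul_sum]
    exact Finset.sum_congr rfl fun z _ => mul_comm _ _
  have step2 : ∑ l, ∑ z, Γ (l, z) * v l ≤
      ∑ l, ∑ z, Γ (l, z) * (lam * d l z + mfun d v lam z) := by
    refine Finset.sum_le_sum fun l _ => Finset.sum_le_sum fun z _ => ?_
    apply mul_le_mul_of_nonneg_left _ (hΓ.1 (l, z))
    linarith [le_mfun d v lam z l]
  have step3 : ∑ l, ∑ z, Γ (l, z) * (lam * d l z + mfun d v lam z) =
      lam * (∑ p : X × X, Γ p * d p.1 p.2) + ∑ z, mfun d v lam z * P z := by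
    have hterm : ∀ l z, Γ (l, z) * (lam * d l z + mfun d v lam z) =
        lam * (Γ (l, z) * d l z) + mfun d v lam z * Γ (l, z) := fun l z => by ring
    simp_rw [hterm, Finset.sum_add_distrib]
    congr 1
    · rw [Fintype.sum_prod_type, Finset.mul_sum]
      exact Finset.sum_congr rfl fun l _ => by rw [Finset.mul_sum]
    · rw [Finset.sum_comm]
      exact Finset.sum_congr rfl fun z _ => by rw [← Finset.mul_sum, hΓ.2.2 z]
  have hfinal : lam * (∑ p : X × X, Γ p * d p.1 p.2) ≤ lam * δ + ε := by
    have h1 : lam * (∑ p : X × X, Γ p * d p.1 p.2) ≤ lam * (δ + ε2) :=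
      mul_le_mul_of_nonneg_left (le_of_lt hclt) hlam
    have h2 : lam * ε2 ≤ ε := by
      rw [hε2, mul_div_assoc']
      rw [div_le_iff₀ hl1]
      nlinarith
    linarith
  linarith [step2, step3.le, step3.ge, step1.le]

end aux

/-- Strong duality for finite Wasserstein distributionally robust linear objectives. -/
theorem wasserstein_dro_strong_duality
    {X : Type*} [Fintype X] [Nonempty X]
    (d : X → X → ℝ) (hd : IsMetricOn d)
    (P : X → ℝ) (hP : IsProbVec P) (v : X → ℝ) (δ : ℝ) (hδ : 0 ≤ δ) :
    sSup {s | ∃ Q : X → ℝ, IsProbVec Q ∧ Wass d Q P ≤ δ ∧ s = ∑ y, v y * Q y} =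
      sInf {s | ∃ lam : ℝ, 0 ≤ lam ∧
        s = lam * δ +
          ∑ y, (Finset.univ.sup' Finset.univ_nonempty fun l => -lam * d l y + v l) * P y} := by
  classical
  obtain ⟨hd0, hdzero, hdsymm, hdtri⟩ := hd
  set T : Set ℝ := {lam | 0 ≤ lam ∧ ∑ y, cmin d v lam y * P y ≤ δ} with hT
  -- a large lambda is in T
  set lam0 : ℝ := max 0 ((univ : Finset (X × X)).sup' univ_nonempty
    fun p => (v p.1 - v p.2) / d p.1 p.2) with hlam0
  have hlam0T : lam0 ∈ T := by
    refine ⟨le_max_left _ _, ?_⟩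
    have hcz : ∀ y : X, cmin d v lam0 y = 0 := by
      intro y
      have hdyy : d y y = 0 := (hdzero y y).2 rfl
      have hyA : y ∈ Aset d v lam0 y := by
        rw [mem_Aset_iff]
        refine le_antisymm (le_mfun d v lam0 y y) ?_
        rw [mfun]
        apply Finset.sup'_le
        intro l _
        by_cases hly : l = y
        · subst hly; exact le_refl _
        · have hdl : 0 < d l y :=
            lt_of_le_of_ne (hd0 l y) (fun h => hly ((hdzero l y).1 h.symm))
          have hle : (v l - v y) / d l y ≤ lam0 :=
            le_trans (Finset.le_sup' (fun p : X × X => (v p.1 - v p.2) / d p.1 p.2)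
              (mem_univ ((l, y) : X × X))) (le_max_right _ _)
          rw [div_le_iff₀ hdl] at hle
          rw [hdyy]; nlinarith
      refine le_antisymm ?_ (cmin_nonneg d hd0 v lam0 y)
      calc cmin d v lam0 y ≤ d y y := Finset.inf'_le _ hyA
        _ = 0 := hdyy
    have hz : ∑ y, cmin d v lam0 y * P y = 0 :=
      Finset.sum_eq_zero fun y _ => by rw [hcz y, zero_mul]
    rw [hz]; exact hδ
  have hTbdd : BddBelow T := ⟨0, fun x hx => hx.1⟩
  set lamS := sInf T with hlamS
  have hlamS0 : 0 ≤ lamS := le_csInf ⟨lam0, hlam0T⟩ fun x hx => hx.1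
  -- Dmin at lamS is ≤ δ
  have hDminS : ∑ y, cmin d v lamS y * P y ≤ δ := by
    set η : ℝ := univ.inf' univ_nonempty fun y => (right_stable d v lamS y).choose with hη
    have hηpos : 0 < η := by
      rw [hη, Finset.lt_inf'_iff]
      intro y _
      exact (right_stable d v lamS y).choose_spec.1
    obtain ⟨x, hxT, hxlt⟩ := exists_lt_of_csInf_lt ⟨lam0, hlam0T⟩
      (show sInf T < lamS + η by rw [← hlamS]; linarith)
    have hlamSx : lamS ≤ x := csInf_le hTbdd hxT
    rcases eq_or_lt_of_le hlamSx with he | hlt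
    · rw [he]; exact hxT.2
    · refine le_trans (Finset.sum_le_sum fun y _ => ?_) hxT.2
      apply mul_le_mul_of_nonneg_right _ (hP.1 y)
      have hy := (right_stable d v lamS y).choose_spec.2
      have hηy : η ≤ (right_stable d v lamS y).choose :=
        Finset.inf'_le _ (mem_univ y)
      show cmin d v lamS y ≤ (Aset d v x y).inf' (Aset_nonempty d v x y) fun l => d l y
      exact Finset.le_inf' _ _ fun l' hl' => hy x hlt (by linarith) l' hl'
  -- Dmax at lamS is ≥ δ when lamS > 0
  have hDmaxS : 0 < lamS → δ ≤ ∑ y, cmax d v lamS y * P y := by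
    intro hpos
    by_contra hcon
    push_neg at hcon
    set η : ℝ := univ.inf' univ_nonempty fun y => (left_stable d v lamS y).choose with hη
    have hηpos : 0 < η := by
      rw [hη, Finset.lt_inf'_iff]
      intro y _
      exact (left_stable d v lamS y).choose_spec.1
    set lam' : ℝ := max (lamS - η / 2) (lamS / 2) with hlam'
    have h1 : lam' < lamS := max_lt (by linarith) (by linarith)
    have h2 : 0 ≤ lam' := le_trans (by linarith) (le_max_right _ _)
    have h3 : lamS - η < lam' := lt_of_lt_of_le (by linarith) (le_max_left _ _)
    have hmem : lam' ∈ T := by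
      refine ⟨h2, le_trans (Finset.sum_le_sum fun y _ => ?_) (le_of_lt hcon)⟩
      apply mul_le_mul_of_nonneg_right _ (hP.1 y)
      have hy := (left_stable d v lamS y).choose_spec.2
      have hηy : η ≤ (left_stable d v lamS y).choose :=
        Finset.inf'_le _ (mem_univ y)
      exact hy lam' (by linarith) h1
    exact absurd (csInf_le hTbdd hmem) (not_le.2 h1)
  -- selections
  set lmin : X → X := fun y =>
    (Finset.exists_mem_eq_inf' (Aset_nonempty d v lamS y) fun l => d l y).choose with hlmin
  have hlminA : ∀ y, lmin y ∈ Aset d v lamS y := fun y =>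
    (Finset.exists_mem_eq_inf' (Aset_nonempty d v lamS y) fun l => d l y).choose_spec.1
  have hlmind : ∀ y, cmin d v lamS y = d (lmin y) y := fun y =>
    (Finset.exists_mem_eq_inf' (Aset_nonempty d v lamS y) fun l => d l y).choose_spec.2
  set lmax : X → X := fun y =>
    (Finset.exists_mem_eq_sup' (Aset_nonempty d v lamS y) fun l => d l y).choose with hlmax
  have hlmaxA : ∀ y, lmax y ∈ Aset d v lamS y := fun y =>
    (Finset.exists_mem_eq_sup' (Aset_nonempty d v lamS y) fun l => d l y).choose_spec.1
  have hlmaxd : ∀ y, cmax d v lamS y = d (lmax y) y := fun y =>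
    (Finset.exists_mem_eq_sup' (Aset_nonempty d v lamS y) fun l => d l y).choose_spec.2
  set Dm : ℝ := ∑ y, cmin d v lamS y * P y with hDm
  set DM : ℝ := ∑ y, cmax d v lamS y * P y with hDM
  have hDmDM : Dm ≤ DM := Finset.sum_le_sum fun y _ =>
    mul_le_mul_of_nonneg_right (cmin_le_cmax d v lamS y) (hP.1 y)
  set t : ℝ := if 0 < lamS then (δ - Dm) / (DM - Dm) else 0 with htdef
  have ht0 : 0 ≤ t := by
    rw [htdef]; split_ifs with h
    · exact div_nonneg (by linarith [hDminS]) (by linarith [hDmDM])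
    · exact le_refl 0
  have ht1 : t ≤ 1 := by
    rw [htdef]; split_ifs with h
    · exact div_le_one_of_le₀ (by linarith [hDmaxS h]) (by linarith [hDmDM])
    · exact zero_le_one
  have hcost_eq : 0 < lamS → (1 - t) * Dm + t * DM = δ := by
    intro hpos
    have htv : t = (δ - Dm) / (DM - Dm) := by rw [htdef, if_pos hpos]
    by_cases hz : DM - Dm = 0
    · have hDmδ : Dm = δ := le_antisymm hDminS (by linarith [hDmaxS hpos])
      have : DM = Dm := by linarith
      rw [this, hDmδ]; ring
    · have : t * (DM - Dm) = δ - Dm := by rw [htv]; exact div_mul_cancel₀ _ hz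
      nlinarith [this]
  have hcost_le : (1 - t) * Dm + t * DM ≤ δ := by
    rcases lt_or_ge 0 lamS with h | h
    · exact le_of_eq (hcost_eq h)
    · have ht : t = 0 := by rw [htdef, if_neg (not_lt.2 h)]
      rw [ht]; simpa using hDminS
  -- the optimal coupling and Q
  set Γ : X × X → ℝ := fun p => P p.2 * ((1 - t) * (if p.1 = lmin p.2 then 1 else 0) +
    t * (if p.1 = lmax p.2 then 1 else 0)) with hΓdef
  set Q : X → ℝ := fun l => ∑ y, Γ (l, y) with hQdef
  have hΓ0 : ∀ p, 0 ≤ Γ p := by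
    intro p
    apply mul_nonneg (hP.1 _)
    have i1 : (0:ℝ) ≤ if p.1 = lmin p.2 then 1 else 0 := by split_ifs <;> norm_num
    have i2 : (0:ℝ) ≤ if p.1 = lmax p.2 then 1 else 0 := by split_ifs <;> norm_num
    have := mul_nonneg (by linarith : (0:ℝ) ≤ 1 - t) i1
    have := mul_nonneg ht0 i2
    linarith
  have hsum : ∀ (w : X → X → ℝ) (y : X), ∑ l, Γ (l, y) * w l y =
      P y * ((1 - t) * w (lmin y) y + t * w (lmax y) y) := by
    intro w y
    have hrw : ∀ l, Γ (l, y) * w l y =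
        P y * ((1 - t) * (if l = lmin y then w l y else 0) +
          t * (if l = lmax y then w l y else 0)) := by
      intro l
      rw [hΓdef]
      by_cases h1 : l = lmin y
      · by_cases h2 : l = lmax y
        · have h3 : lmin y = lmax y := h1.symm.trans h2
          simp only [h1, ← h3, if_pos rfl, eq_self_iff_true, if_true]
          ring
        · have h3 : ¬ lmin y = lmax y := fun h => h2 (h1.trans h)
          simp only [h1, if_pos rfl, if_neg h3, eq_self_iff_true, if_true]
          ring
      · by_cases h2 : l = lmax y
        · have h3 : ¬ lmax y = lmin y := fun h => h1 (h2.trans h)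
          simp only [h2, if_pos rfl, if_neg h3, eq_self_iff_true, if_true]
          ring
        · simp only [if_neg h1, if_neg h2]
          ring
    calc ∑ l, Γ (l, y) * w l y
        = ∑ l, P y * ((1 - t) * (if l = lmin y then w l y else 0) +
            t * (if l = lmax y then w l y else 0)) :=
          Finset.sum_congr rfl fun l _ => hrw l
      _ = P y * ((1 - t) * ∑ l, (if l = lmin y then w l y else 0) +
            t * ∑ l, (if l = lmax y then w l y else 0)) := by
          rw [← Finset.mul_sum, Finset.sum_add_distrib, ← Finset.mul_sum, ← Finset.mul_sum]
      _ = _ := by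
          rw [Finset.sum_ite_eq' univ (lmin y) (fun l => w l y),
            Finset.sum_ite_eq' univ (lmax y) (fun l => w l y)]
          simp
  have hmarg2 : ∀ z, ∑ l, Γ (l, z) = P z := by
    intro z
    calc ∑ l, Γ (l, z) = ∑ l, Γ (l, z) * (fun _ _ => (1:ℝ)) l z := by simp
      _ = P z * ((1 - t) * 1 + t * 1) := hsum (fun _ _ => (1:ℝ)) z
      _ = P z := by ring
  have hQprob : IsProbVec Q := by
    constructor
    · exact fun l => Finset.sum_nonneg fun y _ => hΓ0 (l, y)
    · calc ∑ l, Q l = ∑ l, ∑ y, Γ (l, y) := rfl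
        _ = ∑ y, ∑ l, Γ (l, y) := Finset.sum_comm
        _ = ∑ y, P y := Finset.sum_congr rfl fun z _ => hmarg2 z
        _ = 1 := hP.2
  have hcoup : IsCoupling Q P Γ := ⟨hΓ0, fun y => rfl, hmarg2⟩
  have hcostval : ∑ p : X × X, Γ p * d p.1 p.2 = (1 - t) * Dm + t * DM := by
    rw [Fintype.sum_prod_type, Finset.sum_comm]
    calc ∑ y, ∑ l, Γ (l, y) * d l y
        = ∑ y, P y * ((1 - t) * d (lmin y) y + t * d (lmax y) y) :=
          Finset.sum_congr rfl fun y _ => hsum (fun l y => d l y) y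
      _ = ∑ y, ((1 - t) * (cmin d v lamS y * P y) + t * (cmax d v lamS y * P y)) :=
          Finset.sum_congr rfl fun y _ => by rw [hlmind y, hlmaxd y]; ring
      _ = (1 - t) * Dm + t * DM := by
          rw [Finset.sum_add_distrib, ← Finset.mul_sum, ← Finset.mul_sum]
  have hval : ∑ l, v l * Q l = lamS * δ + ∑ y, mfun d v lamS y * P y := by
    have h1 : ∑ l, v l * Q l = ∑ y, ∑ l, Γ (l, y) * v l := by
      rw [show ∑ l, v l * Q l = ∑ l, ∑ y, Γ (l, y) * v l from
        Finset.sum_congr rfl fun l _ => by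
          rw [hQdef]
          show v l * ∑ y, Γ (l, y) = _
          rw [Finset.mul_sum]
          exact Finset.sum_congr rfl fun y _ => mul_comm _ _]
      exact Finset.sum_comm
    rw [h1]
    calc ∑ y, ∑ l, Γ (l, y) * v l
        = ∑ y, P y * ((1 - t) * v (lmin y) + t * v (lmax y)) :=
          Finset.sum_congr rfl fun y _ => hsum (fun l _ => v l) y
      _ = ∑ y, (mfun d v lamS y * P y + lamS * ((1 - t) * (cmin d v lamS y * P y) +
            t * (cmax d v lamS y * P y))) := by
          refine Finset.sum_congr rfl fun y _ => ?_
          have e1 : v (lmin y) = mfun d v lamS y + lamS * d (lmin y) y := by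
            have := mem_Aset_iff.1 (hlminA y); linarith
          have e2 : v (lmax y) = mfun d v lamS y + lamS * d (lmax y) y := by
            have := mem_Aset_iff.1 (hlmaxA y); linarith
          rw [e1, e2, hlmind y, hlmaxd y]; ring
      _ = ∑ y, mfun d v lamS y * P y + lamS * ((1 - t) * Dm + t * DM) := by
          rw [Finset.sum_add_distrib, ← Finset.mul_sum, Finset.sum_add_distrib,
            ← Finset.mul_sum, ← Finset.mul_sum]
      _ = lamS * δ + ∑ y, mfun d v lamS y * P y := by
          rcases eq_or_lt_of_le hlamS0 with h | h
          · rw [← h]; ring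
          · rw [hcost_eq h]; ring
  have hWQ : Wass d Q P ≤ δ := by
    have hbdd : BddBelow {c | ∃ Γ' : X × X → ℝ, IsCoupling Q P Γ' ∧
        c = ∑ p : X × X, Γ' p * d p.1 p.2} := by
      refine ⟨0, fun c hc => ?_⟩
      obtain ⟨Γ', hΓ', rfl⟩ := hc
      exact Finset.sum_nonneg fun p _ => mul_nonneg (hΓ'.1 p) (hd0 p.1 p.2)
    have hmem : (∑ p : X × X, Γ p * d p.1 p.2) ∈ {c | ∃ Γ' : X × X → ℝ,
        IsCoupling Q P Γ' ∧ c = ∑ p : X × X, Γ' p * d p.1 p.2} := ⟨Γ, hcoup, rfl⟩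
    calc Wass d Q P ≤ ∑ p : X × X, Γ p * d p.1 p.2 := csInf_le hbdd hmem
      _ = (1 - t) * Dm + t * DM := hcostval
      _ ≤ δ := hcost_le
  -- assembly
  set gval : ℝ := lamS * δ + ∑ y, mfun d v lamS y * P y with hgval
  have hgS : gval ∈ {s | ∃ Q : X → ℝ, IsProbVec Q ∧ Wass d Q P ≤ δ ∧
      s = ∑ y, v y * Q y} := ⟨Q, hQprob, hWQ, hval.symm⟩
  have hgI : gval ∈ {s | ∃ lam : ℝ, 0 ≤ lam ∧ s = lam * δ +
      ∑ y, (Finset.univ.sup' Finset.univ_nonempty fun l => -lam * d l y + v l) * P y} :=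
    ⟨lamS, hlamS0, rfl⟩
  have hweak : ∀ s ∈ {s | ∃ Q : X → ℝ, IsProbVec Q ∧ Wass d Q P ≤ δ ∧
      s = ∑ y, v y * Q y}, ∀ i ∈ {s | ∃ lam : ℝ, 0 ≤ lam ∧ s = lam * δ +
      ∑ y, (Finset.univ.sup' Finset.univ_nonempty fun l => -lam * d l y + v l) * P y},
      s ≤ i := by
    rintro s ⟨Q', hQ', hW', rfl⟩ i ⟨lam, hlam, rfl⟩
    exact weak_dual d hd0 P hP v δ Q' hQ' hW' lam hlam
  apply le_antisymm
  · exact csSup_le ⟨gval, hgS⟩ fun s hs =>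
      le_csInf ⟨gval, hgI⟩ fun i hi => hweak s hs i hi
  · calc sInf _ ≤ gval := csInf_le ⟨gval, fun i hi => hweak gval hgS i hi⟩ hgI
      _ ≤ sSup _ := le_csSup ⟨gval, fun s hs => hweak s hs gval hgI⟩ hgS
end

section
/- Kantorovich duality on a finite space: let X be a finite set, d a metric on X, and μ, ν probability vectors on X. Then W(μ,ν) = sup over all pairs of functions f, g : X → ℝ satisfying f(z₁) + g(z₂) ≤ d(z₁,z₂) for all z₁, z₂ ∈ X of Σ_{y∈X} f(y) μ(y) + Σ_{z∈X} g(z) ν(z). -/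
open Finset

/-- The conical hull of finitely many vectors in a finite-dimensional normed space is closed. -/
lemma isClosed_finCone {E : Type*} [NormedAddCommGroup E] [NormedSpace ℝ E]
    [FiniteDimensional ℝ E] {ι : Type*} [Fintype ι] [DecidableEq ι] (v : ι → E) (S : Finset ι) :
    IsClosed {x : E | ∃ c : ι → ℝ, (∀ i, 0 ≤ c i) ∧ x = ∑ i ∈ S, c i • v i} := by
  induction S using Finset.strongInduction with
  | _ S ih =>
  by_cases hli : LinearIndependent ℝ (fun i : S => v i)
  · -- linear independent case: closed embedding image of the nonneg orthant
    set L : (S → ℝ) →ₗ[ℝ] E := ∑ i : S, (LinearMap.proj i).smulRight (v (i : ι)) with hL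
    have hLapp : ∀ c : S → ℝ, L c = ∑ i : S, c i • v (i : ι) := by
      intro c
      simp [hL, LinearMap.sum_apply]
    have hker : LinearMap.ker L = ⊥ := by
      rw [LinearMap.ker_eq_bot']
      intro c hc
      rw [hLapp] at hc
      funext i
      exact (Fintype.linearIndependent_iff.mp hli c hc) i
    have hemb := LinearMap.isClosedEmbedding_of_injective hker
    have hset : {x : E | ∃ c : ι → ℝ, (∀ i, 0 ≤ c i) ∧ x = ∑ i ∈ S, c i • v i} =
        L '' {c : S → ℝ | ∀ i, 0 ≤ c i} := by
      ext x
      constructor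
      · rintro ⟨c, hc, rfl⟩
        refine ⟨fun i => c i, fun i => hc i, ?_⟩
        rw [hLapp, Finset.sum_coe_sort S (fun i => c i • v i)]
      · rintro ⟨c, hc, rfl⟩
        refine ⟨fun i => if h : i ∈ S then c ⟨i, h⟩ else 0, ?_, ?_⟩
        · intro i; by_cases h : i ∈ S <;> simp [h]; exact hc _
        · rw [hLapp, ← Finset.sum_coe_sort S]
          apply Finset.sum_congr rfl
          intro i _
          simp
    have hpi : {c : S → ℝ | ∀ i, 0 ≤ c i} = Set.pi Set.univ (fun _ => Set.Ici (0:ℝ)) := by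
      ext c; simp [Set.mem_pi, Pi.le_def, Subtype.forall]
    rw [hset, hpi]
    exact hemb.isClosedMap _ (isClosed_set_pi fun i _ => isClosed_Ici)
  · -- linearly dependent case: reduce to cones over smaller index sets
    rw [Fintype.linearIndependent_iff] at hli
    push_neg at hli
    obtain ⟨g0, hg0sum, j₀, hj₀⟩ := hli
    obtain ⟨g, hgsum, hgpos⟩ :
        ∃ g : S → ℝ, ∑ i : S, g i • v (i : ι) = 0 ∧ ∃ j : S, 0 < g j := by
      rcases lt_or_gt_of_ne hj₀ with h | h
      · refine ⟨-g0, by simpa [neg_smul] using congrArg Neg.neg hg0sum, j₀, by simpa using h⟩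
      · exact ⟨g0, hg0sum, j₀, h⟩
    set a : ι → ℝ := fun i => if h : i ∈ S then g ⟨i, h⟩ else 0 with ha
    have ha_sum : ∑ i ∈ S, a i • v i = 0 := by
      rw [← Finset.sum_coe_sort S (fun i => a i • v i), ← hgsum]
      exact Finset.sum_congr rfl fun i _ => by simp [ha]
    obtain ⟨j₁, hj₁⟩ := hgpos
    have ha_pos : ∃ j ∈ S, 0 < a j := ⟨(j₁ : ι), j₁.2, by simp [ha, j₁.2]; simpa using hj₁⟩
    set T : Finset ι := S.filter (fun i => 0 < a i) with hT
    have hTne : T.Nonempty := by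
      obtain ⟨j, hjS, hja⟩ := ha_pos
      exact ⟨j, Finset.mem_filter.mpr ⟨hjS, hja⟩⟩
    have hsplit : {x : E | ∃ c : ι → ℝ, (∀ i, 0 ≤ c i) ∧ x = ∑ i ∈ S, c i • v i} =
        ⋃ j ∈ (T : Set ι),
          {x : E | ∃ c : ι → ℝ, (∀ i, 0 ≤ c i) ∧ x = ∑ i ∈ S.erase j, c i • v i} := by
      apply Set.Subset.antisymm
      · rintro x ⟨c, hc, rfl⟩
        obtain ⟨j, hjT, hjmin⟩ := Finset.exists_min_image T (fun i => c i / a i) hTne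
        have hjS : j ∈ S := (Finset.mem_filter.mp hjT).1
        have hja : 0 < a j := (Finset.mem_filter.mp hjT).2
        set t : ℝ := c j / a j with ht
        have ht0 : 0 ≤ t := div_nonneg (hc j) hja.le
        set c' : ι → ℝ := fun i => c i - t * a i with hc'
        have hc'0 : ∀ i, 0 ≤ c' i := by
          intro i
          by_cases hi : i ∈ T
          · have hia : 0 < a i := (Finset.mem_filter.mp hi).2
            have h2 := (le_div_iff₀ hia).mp (hjmin i hi)
            simp only [hc']
            linarith
          · have hia : a i ≤ 0 := by
              by_cases hiS : i ∈ S
              · by_contra h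
                push_neg at h
                exact hi (Finset.mem_filter.mpr ⟨hiS, h⟩)
              · simp [ha, hiS]
            have h3 : t * a i ≤ 0 := mul_nonpos_of_nonneg_of_nonpos ht0 hia
            have := hc i
            simp only [hc']
            linarith
        have hc'j : c' j = 0 := by
          simp only [hc', ht]
          field_simp
          ring
        have hsum' : ∑ i ∈ S, c' i • v i = ∑ i ∈ S, c i • v i := by
          simp only [hc', sub_smul, mul_smul]
          rw [Finset.sum_sub_distrib, ← Finset.smul_sum, ha_sum, smul_zero, sub_zero]
        have hdecomp := Finset.add_sum_erase S (fun i => c' i • v i) hjS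
        refine Set.mem_biUnion (by exact_mod_cast hjT) ⟨c', hc'0, ?_⟩
        simp only [hc'j, zero_smul, zero_add] at hdecomp
        rw [← hsum', ← hdecomp]
      · intro x hx
        simp only [Set.mem_iUnion] at hx
        obtain ⟨j, hjT, c, hc, rfl⟩ := hx
        have hjS : j ∈ S := (Finset.mem_filter.mp (by exact_mod_cast hjT)).1
        refine ⟨fun i => if i = j then 0 else c i, fun i => ?_, ?_⟩
        · by_cases h : i = j <;> simp [h, hc i]
        · rw [← Finset.sum_erase (f := fun i => (if i = j then 0 else c i) • v i) (a := j) S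
            (show (if j = j then (0:ℝ) else c j) • v j = 0 by simp)]
          exact (Finset.sum_congr rfl fun i hi => by
            simp only [if_neg (Finset.ne_of_mem_erase hi)]).symm
    rw [hsplit]
    exact Set.Finite.isClosed_biUnion T.finite_toSet fun j hj =>
      ih (S.erase j) (Finset.erase_ssubset (Finset.mem_filter.mp (by exact_mod_cast hj)).1)

/-- Kantorovich duality on a finite space. -/
theorem kantorovich_duality
    {X : Type*} [Fintype X]
    (d : X → X → ℝ) (hd : IsMetricOn d)
    (μ ν : X → ℝ) (hμ : IsProbVec μ) (hν : IsProbVec ν) :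
    Wass d μ ν =
      sSup {s | ∃ f g : X → ℝ, (∀ z₁ z₂, f z₁ + g z₂ ≤ d z₁ z₂) ∧
        s = ∑ y, f y * μ y + ∑ z, g z * ν z} := by
  classical
  set P : Set ℝ :=
    {c | ∃ Γ : X × X → ℝ, IsCoupling μ ν Γ ∧ c = ∑ p : X × X, Γ p * d p.1 p.2} with hP
  set D : Set ℝ := {s | ∃ f g : X → ℝ, (∀ z₁ z₂, f z₁ + g z₂ ≤ d z₁ z₂) ∧
    s = ∑ y, f y * μ y + ∑ z, g z * ν z} with hD
  set Γ₀ : X × X → ℝ := fun p => μ p.1 * ν p.2 with hΓ₀def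
  have hΓ₀ : IsCoupling μ ν Γ₀ := by
    refine ⟨fun p => mul_nonneg (hμ.1 _) (hν.1 _), fun y => ?_, fun z => ?_⟩
    · simp only [hΓ₀def, ← Finset.mul_sum, hν.2, mul_one]
    · simp only [hΓ₀def, ← Finset.sum_mul, hμ.2, one_mul]
  set c₀ : ℝ := ∑ p : X × X, Γ₀ p * d p.1 p.2 with hc₀def
  have hc₀ : c₀ ∈ P := ⟨Γ₀, hΓ₀, rfl⟩
  have hPne : P.Nonempty := ⟨c₀, hc₀⟩
  have hPlb : ∀ c ∈ P, (0:ℝ) ≤ c := by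
    rintro c ⟨Γ, hΓ, rfl⟩
    exact Finset.sum_nonneg fun p _ => mul_nonneg (hΓ.1 p) (hd.1 _ _)
  have hPbdd : BddBelow P := ⟨0, hPlb⟩
  have hweak : ∀ s ∈ D, ∀ c ∈ P, s ≤ c := by
    rintro s ⟨f, g, hfg, rfl⟩ c ⟨Γ, hΓ, rfl⟩
    have h1 : ∑ y, f y * μ y = ∑ p : X × X, f p.1 * Γ p := by
      rw [Fintype.sum_prod_type]
      exact Finset.sum_congr rfl fun y _ => by rw [← hΓ.2.1 y, Finset.mul_sum]
    have h2 : ∑ z, g z * ν z = ∑ p : X × X, g p.2 * Γ p := by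
      rw [Fintype.sum_prod_type_right]
      exact Finset.sum_congr rfl fun z _ => by rw [← hΓ.2.2 z, Finset.mul_sum]
    rw [h1, h2, ← Finset.sum_add_distrib]
    refine Finset.sum_le_sum fun p _ => ?_
    have h0 := hΓ.1 p
    nlinarith [mul_le_mul_of_nonneg_right (hfg p.1 p.2) h0]
  have hDne : (0:ℝ) ∈ D :=
    ⟨0, 0, fun z₁ z₂ => by simpa using hd.1 z₁ z₂, by simp⟩
  have hDbdd : BddAbove D := ⟨c₀, fun s hs => hweak s hs c₀ hc₀⟩
  have hWP : Wass d μ ν = sInf P := rfl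
  rw [hWP]
  -- the cone setup
  set v : X × X → (X → ℝ) × (X → ℝ) × ℝ :=
    fun p => (Pi.single p.1 1, Pi.single p.2 1, d p.1 p.2) with hv
  set C : Set ((X → ℝ) × (X → ℝ) × ℝ) :=
    {x | ∃ c : X × X → ℝ, (∀ q, 0 ≤ c q) ∧ x = ∑ q ∈ Finset.univ, c q • v q} with hC
  have hCclosed : IsClosed C := isClosed_finCone v Finset.univ
  have hCconv : Convex ℝ C := by
    rintro x ⟨cx, hcx, rfl⟩ y ⟨cy, hcy, rfl⟩ a b ha hb hab
    refine ⟨fun q => a * cx q + b * cy q,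
      fun q => add_nonneg (mul_nonneg ha (hcx q)) (mul_nonneg hb (hcy q)), ?_⟩
    rw [Finset.smul_sum, Finset.smul_sum, ← Finset.sum_add_distrib]
    exact Finset.sum_congr rfl fun q _ => by rw [add_smul, smul_smul, smul_smul]
  have hC0 : (0 : (X → ℝ) × (X → ℝ) × ℝ) ∈ C := ⟨0, fun q => le_refl 0, by simp⟩
  have hsmulC : ∀ t : ℝ, 0 ≤ t → ∀ x ∈ C, t • x ∈ C := by
    rintro t ht x ⟨c, hc, rfl⟩
    refine ⟨fun q => t * c q, fun q => mul_nonneg ht (hc q), ?_⟩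
    rw [Finset.smul_sum]
    exact Finset.sum_congr rfl fun q _ => by rw [smul_smul]
  -- decomposition of cone combinations
  have hsumv : ∀ Γ : X × X → ℝ, ∑ q ∈ Finset.univ, Γ q • v q =
      ((fun y => ∑ z, Γ (y, z)), (fun z => ∑ y, Γ (y, z)),
        ∑ q : X × X, Γ q * d q.1 q.2) := by
    intro Γ
    rw [Prod.ext_iff, Prod.ext_iff]
    refine ⟨?_, ?_, ?_⟩
    · rw [Prod.fst_sum]
      funext y
      rw [Finset.sum_apply]
      simp only [hv, Prod.smul_fst, Pi.smul_apply, Pi.single_apply, smul_eq_mul,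
        mul_ite, mul_one, mul_zero]
      rw [Fintype.sum_prod_type]
      rw [show (∑ x : X, ∑ x₁ : X, if y = x then Γ (x, x₁) else 0)
          = ∑ x : X, (if y = x then ∑ x₁ : X, Γ (x, x₁) else 0) from
        Finset.sum_congr rfl fun x _ => by split_ifs <;> simp]
      simp [Finset.sum_ite_eq]
    · rw [Prod.snd_sum, Prod.fst_sum]
      funext z
      rw [Finset.sum_apply]
      simp only [hv, Prod.smul_snd, Prod.smul_fst, Pi.smul_apply, Pi.single_apply,
        smul_eq_mul, mul_ite, mul_one, mul_zero]
      rw [Fintype.sum_prod_type_right]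
      rw [show (∑ x : X, ∑ x₁ : X, if z = x then Γ (x₁, x) else 0)
          = ∑ x : X, (if z = x then ∑ x₁ : X, Γ (x₁, x) else 0) from
        Finset.sum_congr rfl fun x _ => by split_ifs <;> simp]
      simp [Finset.sum_ite_eq]
    · rw [Prod.snd_sum, Prod.snd_sum]
      simp [hv]
  -- strong duality via separation
  have hstrong : ∀ ε : ℝ, 0 < ε → ∃ s ∈ D, sInf P - ε < s := by
    intro ε hε
    have hw : ((μ, ν, sInf P - ε) : (X → ℝ) × (X → ℝ) × ℝ) ∉ C := by
      rintro ⟨Γ, hΓ0, heq⟩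
      rw [hsumv Γ] at heq
      obtain ⟨h1, h23⟩ := Prod.ext_iff.mp heq
      obtain ⟨h2, h3⟩ := Prod.ext_iff.mp h23
      have hcpl : IsCoupling μ ν Γ :=
        ⟨hΓ0, fun y => congrFun h1.symm y, fun z => congrFun h2.symm z⟩
      have hmem : sInf P - ε ∈ P := ⟨Γ, hcpl, h3⟩
      have := csInf_le hPbdd hmem
      linarith
    obtain ⟨φ, u, hφC, hφw⟩ := geometric_hahn_banach_closed_point hCconv hCclosed hw
    have hu0 : 0 < u := by simpa using hφC 0 hC0
    have hφle : ∀ x ∈ C, φ x ≤ 0 := by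
      intro x hx
      by_contra h
      push_neg at h
      have htx := hsmulC ((u + 1) / φ x) (by positivity) x hx
      have h2 := hφC _ htx
      rw [map_smul, smul_eq_mul, div_mul_cancel₀ _ (ne_of_gt h)] at h2
      linarith
    set T : ℝ := φ (0, 0, 1) with hTdef
    set F : X → ℝ := fun y => φ (Pi.single y 1, 0, 0) with hF
    set G : X → ℝ := fun z => φ (0, Pi.single z 1, 0) with hG
    have master : ∀ (a b : X → ℝ) (t : ℝ),
        φ (a, b, t) = ∑ y, a y * F y + ∑ z, b z * G z + t * T := by
      intro a b t
      have hdecomp : ((a, b, t) : (X → ℝ) × (X → ℝ) × ℝ) =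
          (∑ y, ((Pi.single y (a y) : X → ℝ), (0 : X → ℝ), (0:ℝ))) +
          (∑ z, ((0 : X → ℝ), (Pi.single z (b z) : X → ℝ), (0:ℝ))) +
          t • ((0, 0, 1) : (X → ℝ) × (X → ℝ) × ℝ) := by
        rw [Prod.ext_iff, Prod.ext_iff]
        refine ⟨?_, ?_, ?_⟩ <;>
          simp [Prod.fst_sum, Prod.snd_sum, Finset.univ_sum_single]
      rw [hdecomp, map_add, map_add, map_sum, map_sum, map_smul, smul_eq_mul]
      congr 1
      congr 1
      · refine Finset.sum_congr rfl fun y _ => ?_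
        have hsingle : ((Pi.single y (a y) : X → ℝ), (0 : X → ℝ), (0:ℝ)) =
            a y • ((Pi.single y 1 : X → ℝ), (0 : X → ℝ), (0:ℝ)) := by
          rw [Prod.ext_iff, Prod.ext_iff]
          refine ⟨?_, by simp, by simp⟩
          simp [← Pi.single_smul]
        rw [hsingle, map_smul, smul_eq_mul, hF]
      · refine Finset.sum_congr rfl fun z _ => ?_
        have hsingle : ((0 : X → ℝ), (Pi.single z (b z) : X → ℝ), (0:ℝ)) =
            b z • ((0 : X → ℝ), (Pi.single z 1 : X → ℝ), (0:ℝ)) := by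
          rw [Prod.ext_iff, Prod.ext_iff]
          refine ⟨by simp, ?_, by simp⟩
          simp [← Pi.single_smul]
        rw [hsingle, map_smul, smul_eq_mul, hG]
    have hgen : ∀ p : X × X, F p.1 + G p.2 + d p.1 p.2 * T ≤ 0 := by
      intro p
      have hvC : v p ∈ C := by
        refine ⟨fun q => if q = p then 1 else 0,
          fun q => by by_cases h : q = p <;> simp [h], ?_⟩
        simp [Finset.sum_ite_eq']
      have h1 := hφle _ hvC
      rw [hv] at h1
      rw [master] at h1
      simpa [Pi.single_apply, ite_mul, Finset.sum_ite_eq, Finset.sum_ite_eq'] using h1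
    have hμνC : ((μ, ν, c₀) : (X → ℝ) × (X → ℝ) × ℝ) ∈ C := by
      refine ⟨Γ₀, hΓ₀.1, ?_⟩
      rw [hsumv Γ₀]
      rw [Prod.ext_iff, Prod.ext_iff]
      exact ⟨funext fun y => (hΓ₀.2.1 y).symm, funext fun z => (hΓ₀.2.2 z).symm, rfl⟩
    have hA1 := hφle _ hμνC
    rw [master] at hA1
    have hA2 : u < ∑ y, μ y * F y + ∑ z, ν z * G z + (sInf P - ε) * T := by
      rw [← master]; exact hφw
    have hc₀P : sInf P ≤ c₀ := csInf_le hPbdd hc₀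
    have hT : T < 0 := by nlinarith
    have hTpos : 0 < -T := by linarith
    set f : X → ℝ := fun y => F y / (-T) with hf
    set g : X → ℝ := fun z => G z / (-T) with hg
    have hfeas : ∀ z₁ z₂, f z₁ + g z₂ ≤ d z₁ z₂ := by
      intro z₁ z₂
      rw [hf, hg, ← add_div, div_le_iff₀ hTpos]
      nlinarith [hgen (z₁, z₂)]
    refine ⟨∑ y, f y * μ y + ∑ z, g z * ν z, ⟨f, g, hfeas, rfl⟩, ?_⟩
    have hsum1 : ∑ y, f y * μ y = (∑ y, μ y * F y) / (-T) := by
      rw [Finset.sum_div]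
      exact Finset.sum_congr rfl fun y _ => by rw [hf]; ring
    have hsum2 : ∑ z, g z * ν z = (∑ z, ν z * G z) / (-T) := by
      rw [Finset.sum_div]
      exact Finset.sum_congr rfl fun z _ => by rw [hg]; ring
    rw [hsum1, hsum2, ← add_div, lt_div_iff₀ hTpos]
    nlinarith
  apply le_antisymm
  · by_contra h
    push_neg at h
    obtain ⟨s, hsD, hs⟩ := hstrong (sInf P - sSup D) (by linarith)
    have := le_csSup hDbdd hsD
    linarith
  · exact csSup_le ⟨0, hDne⟩ fun s hs => le_csInf hPne (hweak s hs)
end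

section
/- One-potential form of Kantorovich duality on a finite space: let X be a finite set, d a metric on X, and μ, ν probability vectors on X. Then W(μ,ν) = sup over all functions f : X → ℝ of [ Σ_{y∈X} f(y) μ(y) + Σ_{z₂∈X} ( min_{z₁∈X} ( d(z₁,z₂) − f(z₁) ) ) ν(z₂) ]. -/
open Finset

/-- The (marginals, cost) linear map used in the duality proof. -/
noncomputable def KDT {X : Type*} [Fintype X] (d : X → X → ℝ) :
    (X × X → ℝ) →ₗ[ℝ] (X → ℝ) × (X → ℝ) × ℝ where
  toFun Γ := (fun y => ∑ z, Γ (y, z), fun z => ∑ y, Γ (y, z), ∑ p : X × X, Γ p * d p.1 p.2)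
  map_add' Γ₁ Γ₂ := by
    ext <;> simp [Finset.sum_add_distrib, add_mul]
  map_smul' c Γ := by
    ext <;> simp [Finset.mul_sum, mul_assoc]

/-- One-potential form of Kantorovich duality on a finite space. -/
theorem kantorovich_duality_one_potential
    {X : Type*} [Fintype X] [Nonempty X]
    (d : X → X → ℝ) (hd : IsMetricOn d)
    (μ ν : X → ℝ) (hμ : IsProbVec μ) (hν : IsProbVec ν) :
    Wass d μ ν =
      sSup {s | ∃ f : X → ℝ,
        s = ∑ y, f y * μ y +
          ∑ z₂, (Finset.univ.inf' Finset.univ_nonempty fun z₁ => d z₁ z₂ - f z₁) * ν z₂} := by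
  classical
  obtain ⟨hμ0, hμ1⟩ := hμ
  obtain ⟨hν0, hν1⟩ := hν
  obtain ⟨hd0, -⟩ := hd
  set S := {s | ∃ f : X → ℝ,
      s = ∑ y, f y * μ y +
        ∑ z₂, (Finset.univ.inf' Finset.univ_nonempty fun z₁ => d z₁ z₂ - f z₁) * ν z₂}
    with hSdef
  set Cset := {c | ∃ Γ : X × X → ℝ, IsCoupling μ ν Γ ∧ c = ∑ p : X × X, Γ p * d p.1 p.2}
    with hCdef
  -- the product coupling
  have hΓ₀ : IsCoupling μ ν (fun p : X × X => μ p.1 * ν p.2) := by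
    refine ⟨fun p => mul_nonneg (hμ0 p.1) (hν0 p.2), fun y => ?_, fun z => ?_⟩
    · show ∑ z, μ y * ν z = μ y
      rw [← Finset.mul_sum, hν1, mul_one]
    · show ∑ y, μ y * ν z = ν z
      rw [← Finset.sum_mul, hμ1, one_mul]
  set c₀ : ℝ := ∑ p : X × X, (μ p.1 * ν p.2) * d p.1 p.2 with hc₀def
  have hc₀ : c₀ ∈ Cset := ⟨_, hΓ₀, rfl⟩
  have hCne : Cset.Nonempty := ⟨c₀, hc₀⟩
  have hCbdd : BddBelow Cset := by
    refine ⟨0, fun c hc => ?_⟩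
    obtain ⟨Γ, ⟨hΓ0, -, -⟩, rfl⟩ := hc
    exact Finset.sum_nonneg fun p _ => mul_nonneg (hΓ0 p) (hd0 p.1 p.2)
  -- weak duality
  have weak : ∀ s ∈ S, ∀ c ∈ Cset, s ≤ c := by
    rintro s ⟨f, rfl⟩ c ⟨Γ, ⟨hΓ0, hΓμ, hΓν⟩, rfl⟩
    set g : X → ℝ := fun z₂ => Finset.univ.inf' Finset.univ_nonempty fun z₁ => d z₁ z₂ - f z₁
      with hgdef
    have h1 : ∑ y, f y * μ y = ∑ y, ∑ z, f y * Γ (y, z) := by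
      refine Finset.sum_congr rfl fun y _ => ?_
      rw [← hΓμ y, Finset.mul_sum]
    have h2 : ∑ z, g z * ν z = ∑ y, ∑ z, g z * Γ (y, z) := by
      rw [Finset.sum_comm]
      refine Finset.sum_congr rfl fun z _ => ?_
      rw [← hΓν z, Finset.mul_sum]
    rw [h1, h2, ← Finset.sum_add_distrib]
    rw [Fintype.sum_prod_type]
    refine Finset.sum_le_sum fun y _ => ?_
    rw [← Finset.sum_add_distrib]
    refine Finset.sum_le_sum fun z _ => ?_
    have hg : g z ≤ d y z - f y := Finset.inf'_le _ (Finset.mem_univ y)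
    calc f y * Γ (y, z) + g z * Γ (y, z) = (f y + g z) * Γ (y, z) := by ring
      _ ≤ d y z * Γ (y, z) := mul_le_mul_of_nonneg_right (by linarith) (hΓ0 (y, z))
      _ = Γ (y, z) * d y z := mul_comm _ _
  have hSne : S.Nonempty := ⟨_, (0 : X → ℝ), rfl⟩
  have hSbdd : BddAbove S := ⟨c₀, fun s hs => weak s hs c₀ hc₀⟩
  have hWass : Wass d μ ν = sInf Cset := rfl
  set w := sInf Cset with hwdef
  -- strong duality: for every ε > 0 there is a dual value above w - ε
  have key : ∀ ε : ℝ, 0 < ε → ∃ s ∈ S, w - ε < s := by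
    intro ε hε
    set T := KDT (X := X) d with hTdef
    set C : Set ((X → ℝ) × (X → ℝ) × ℝ) := T '' (stdSimplex ℝ (X × X)) with hCCdef
    have hCconv : Convex ℝ C := (convex_stdSimplex ℝ _).linear_image T
    have hCcomp : IsCompact C :=
      (isCompact_stdSimplex ℝ (X × X)).image T.continuous_of_finiteDimensional
    -- couplings give points of C
    have hmemC : ∀ Γ : X × X → ℝ, IsCoupling μ ν Γ →
        (μ, ν, ∑ p : X × X, Γ p * d p.1 p.2) ∈ C := by
      rintro Γ ⟨hΓ0, hΓμ, hΓν⟩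
      refine ⟨Γ, ⟨hΓ0, ?_⟩, ?_⟩
      · rw [Fintype.sum_prod_type]
        simp_rw [hΓμ]
        exact hμ1
      · show (fun y => ∑ z, Γ (y, z), fun z => ∑ y, Γ (y, z), _) = _
        refine Prod.ext (funext fun y => hΓμ y) (Prod.ext (funext fun z => hΓν z) rfl)
    have hx : (μ, ν, w - ε) ∉ C := by
      rintro ⟨Γ, ⟨hΓ0, -⟩, hTΓ⟩
      have h1 : (fun y => ∑ z, Γ (y, z)) = μ := congrArg Prod.fst hTΓ
      have h2 : (fun z => ∑ y, Γ (y, z)) = ν := congrArg Prod.fst (congrArg Prod.snd hTΓ)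
      have h3 : (∑ p : X × X, Γ p * d p.1 p.2) = w - ε :=
        congrArg (fun e => e.2.2) hTΓ
      have hcoup : IsCoupling μ ν Γ :=
        ⟨hΓ0, fun y => congrFun h1 y, fun z => congrFun h2 z⟩
      have : w - ε ∈ Cset := ⟨Γ, hcoup, h3.symm⟩
      have h5 : w ≤ w - ε := csInf_le hCbdd this
      linarith
    obtain ⟨ℓ, u, hxu, hC⟩ := geometric_hahn_banach_point_closed hCconv hCcomp.isClosed hx
    set f : X → ℝ := fun y => ℓ ((fun j => if y = j then (1 : ℝ) else 0), 0, 0) with hfdef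
    set g : X → ℝ := fun z => ℓ (0, (fun j => if z = j then (1 : ℝ) else 0), 0) with hgdef
    set α : ℝ := ℓ (0, 0, 1) with hαdef
    -- decomposition of ℓ
    have hdec : ∀ (p q : X → ℝ) (t : ℝ),
        ℓ (p, q, t) = ∑ y, p y * f y + ∑ z, q z * g z + t * α := by
      intro p q t
      have hsplit : (p, q, t) = ((p, 0, 0) : (X → ℝ) × (X → ℝ) × ℝ) + (0, q, 0) + (0, 0, t) := by
        refine Prod.ext ?_ (Prod.ext ?_ ?_) <;> simp
      rw [hsplit, map_add, map_add]
      have e1 : ℓ (p, 0, 0) = ∑ y, p y * f y := by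
        have := (ℓ.toLinearMap.comp (LinearMap.inl ℝ (X → ℝ) ((X → ℝ) × ℝ))).pi_apply_eq_sum_univ p
        simpa [smul_eq_mul, hfdef, Prod.mk_zero_zero] using this
      have e2 : ℓ (0, q, 0) = ∑ z, q z * g z := by
        have := (ℓ.toLinearMap.comp ((LinearMap.inr ℝ (X → ℝ) ((X → ℝ) × ℝ)).comp
          (LinearMap.inl ℝ (X → ℝ) ℝ))).pi_apply_eq_sum_univ q
        simpa [smul_eq_mul] using this
      have e3 : ℓ (0, 0, t) = t * α := by
        have : ((0, 0, t) : (X → ℝ) × (X → ℝ) × ℝ) = t • (0, 0, 1) := by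
          refine Prod.ext ?_ (Prod.ext ?_ ?_) <;> simp
        rw [this, map_smul, smul_eq_mul, hαdef]
      rw [e1, e2, e3]
    -- values of ℓ on generators
    have hgen : ∀ y z : X, u < f y + g z + d y z * α := by
      intro y z
      have hmem : (fun p : X × X => if (y, z) = p then (1 : ℝ) else 0) ∈ stdSimplex ℝ (X × X) := by
        constructor
        · intro p; by_cases h : (y, z) = p <;> simp [h]
        · show (∑ p : X × X, if (y, z) = p then (1 : ℝ) else 0) = 1
          simp [Finset.sum_ite_eq]
      have hTval : T (fun p : X × X => if (y, z) = p then (1 : ℝ) else 0) =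
          ((fun j => if y = j then (1 : ℝ) else 0), (fun j => if z = j then (1 : ℝ) else 0),
            d y z) := by
        refine Prod.ext (funext fun y' => ?_) (Prod.ext (funext fun z' => ?_) ?_)
        · show (∑ z', if (y, z) = (y', z') then (1 : ℝ) else 0) = _
          simp [Prod.ext_iff, ite_and, Finset.sum_ite_eq]
        · show (∑ y', if (y, z) = (y', z') then (1 : ℝ) else 0) = _
          simp [Prod.ext_iff, ite_and, Finset.sum_ite_eq]
        · show (∑ p : X × X, (if (y, z) = p then (1 : ℝ) else 0) * d p.1 p.2) = d y z
          simp [ite_mul, Finset.sum_ite_eq]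
      have := hC _ ⟨_, hmem, rfl⟩
      rw [hTval, hdec] at this
      have hf : ∑ y', (if y = y' then (1 : ℝ) else 0) * f y' = f y := by
        simp [ite_mul, Finset.sum_ite_eq]
      have hg : ∑ z', (if z = z' then (1 : ℝ) else 0) * g z' = g z := by
        simp [ite_mul, Finset.sum_ite_eq]
      rw [hf, hg] at this
      linarith
    set A : ℝ := ∑ y, μ y * f y with hAdef
    set B : ℝ := ∑ z, ν z * g z with hBdef
    have hpoint : A + B + (w - ε) * α < u := by
      have := hxu
      rw [hdec] at this
      exact this
    have hc₀pt : u < A + B + c₀ * α := by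
      have h := hC _ (hmemC _ hΓ₀)
      rw [hdec] at h
      exact h
    have hwc₀ : w ≤ c₀ := csInf_le hCbdd hc₀
    have hα : 0 < α := by
      rcases lt_or_ge 0 α with h | h
      · exact h
      · exfalso
        have h1 : (c₀ - (w - ε)) * α ≤ 0 :=
          mul_nonpos_of_nonneg_of_nonpos (by linarith) h
        nlinarith
    set F : X → ℝ := fun y => -(f y) / α with hFdef
    set G : X → ℝ := fun z => (u - g z) / α with hGdef
    have hFG : ∀ y z : X, F y + G z < d y z := by
      intro y z
      have h := hgen y z
      have : F y + G z = (u - f y - g z) / α := by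
        rw [hFdef, hGdef]
        field_simp
        ring
      rw [this, div_lt_iff₀ hα]
      linarith
    refine ⟨_, ⟨F, rfl⟩, ?_⟩
    have hGle : ∀ z₂ : X,
        G z₂ ≤ Finset.univ.inf' Finset.univ_nonempty fun z₁ => d z₁ z₂ - F z₁ :=
      fun z₂ => Finset.le_inf' _ _ fun z₁ _ => le_of_lt (by linarith [hFG z₁ z₂])
    have hstep : ∑ z, G z * ν z ≤
        ∑ z₂, (Finset.univ.inf' Finset.univ_nonempty fun z₁ => d z₁ z₂ - F z₁) * ν z₂ :=
      Finset.sum_le_sum fun z _ => mul_le_mul_of_nonneg_right (hGle z) (hν0 z)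
    have e1 : ∑ y, F y * μ y * α = ∑ y, -(μ y * f y) :=
      Finset.sum_congr rfl fun y _ => by
        show -(f y) / α * μ y * α = -(μ y * f y)
        field_simp
    have e2 : ∑ z, G z * ν z * α = u - B := by
      have hterm : ∀ z ∈ Finset.univ, G z * ν z * α = u * ν z - ν z * g z := fun z _ => by
        show (u - g z) / α * ν z * α = u * ν z - ν z * g z
        field_simp
      rw [Finset.sum_congr rfl hterm, Finset.sum_sub_distrib, ← Finset.mul_sum, hν1, mul_one,
        hBdef]
    have hmul : (∑ y, F y * μ y + ∑ z, G z * ν z) * α = u - A - B := by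
      rw [add_mul, Finset.sum_mul, Finset.sum_mul, e1, e2, Finset.sum_neg_distrib, hAdef]
      ring
    have hlt : (w - ε) * α < (∑ y, F y * μ y + ∑ z, G z * ν z) * α := by
      rw [hmul]; linarith
    have hfin : w - ε < ∑ y, F y * μ y + ∑ z, G z * ν z :=
      lt_of_mul_lt_mul_right hlt hα.le
    linarith [hstep]
  -- assemble
  rw [hWass]
  have h1 : sSup S ≤ w :=
    csSup_le hSne fun s hs => le_csInf hCne fun c hc => weak s hs c hc
  have h2 : w ≤ sSup S := by
    by_contra h
    push_neg at h
    obtain ⟨s, hs, hws⟩ := key (w - sSup S) (by linarith)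
    have := le_csSup hSbdd hs
    linarith
  linarith
end

section
/- High-confidence Wasserstein bound between empirical and average distributions: let X be a finite set with the Hamming metric, ξ₁, …, ξ_N independent X-valued random variables with ξ_i distributed as P_i, P̂ the empirical distribution P̂(y) = (1/N) Σ_i 1{ξ_i = y}, and P̄ = (1/N) Σ_i P_i. For β ∈ (0,1) set ε = sqrt( ln(2|X|/β) / (2N) ) and ρ = (|X|/2) ε. Then with probability at least 1 − β, W(P̂, P̄) ≤ ρ, where W is the 1-Wasserstein distance with the Hamming metric (equivalently, the total variation distance). -/
open Finset

/-- The Hamming distance on `X`. -/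
def hamming {X : Type*} [DecidableEq X] (x y : X) : ℝ := if x = y then 0 else 1

open MeasureTheory ProbabilityTheory

section aux
open Real

lemma hoeff_bern {p : ℝ} (hp0 : 0 ≤ p) (hp1 : p ≤ 1) (t : ℝ) :
    (1 - p + p * exp t) * exp (-(t * p)) ≤ exp (t ^ 2 / 8) := by
  set D : ℝ → ℝ := fun s => 1 - p + p * exp s with hDdef
  have hD : ∀ s, 0 < D s := by
    intro s
    rcases eq_or_lt_of_le hp0 with h | h
    · simp [hDdef, ← h]
    · have := exp_pos s
      have : 0 < p * exp s := mul_pos h this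
      simp only [hDdef]; linarith
  have hDderiv : ∀ s, HasDerivAt D (p * exp s) s := by
    intro s
    exact ((hasDerivAt_exp s).const_mul p).const_add (1 - p)
  set f : ℝ → ℝ := fun s => s ^ 2 / 8 + s * p - Real.log (D s) with hfdef
  set g : ℝ → ℝ := fun s => s / 4 + p - p * exp s / D s with hgdef
  have hf : ∀ s, HasDerivAt f (g s) s := by
    intro s
    have h1 : HasDerivAt (fun s : ℝ => s ^ 2 / 8 + s * p) (s / 4 + p) s := by
      have := ((hasDerivAt_pow 2 s).div_const 8).add ((hasDerivAt_id s).mul_const p)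
      exact this.congr_deriv (by norm_num; ring)
    have h2 : HasDerivAt (fun s => Real.log (D s)) (p * exp s / D s) s :=
      (hDderiv s).log (hD s).ne'
    exact h1.sub h2
  have hg : ∀ s, HasDerivAt g (1 / 4 - p * exp s * (1 - p) / (D s) ^ 2) s := by
    intro s
    have h1 : HasDerivAt (fun s : ℝ => s / 4 + p) (1 / 4) s := by
      simpa using ((hasDerivAt_id s).div_const 4).add_const p
    have h2 : HasDerivAt (fun s => p * exp s / D s)
        ((p * exp s * D s - p * exp s * (p * exp s)) / (D s) ^ 2) s :=
      ((hasDerivAt_exp s).const_mul p).div (hDderiv s) (hD s).ne'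
    have h3 := h1.sub h2
    refine h3.congr_deriv ?_
    have hne := (hD s).ne'
    have hexp : D s = 1 - p + p * exp s := rfl
    rw [hexp]; ring
  have hg' : ∀ s, 0 ≤ 1 / 4 - p * exp s * (1 - p) / (D s) ^ 2 := by
    intro s
    have hDs := hD s
    set u : ℝ := p * exp s / D s with hu
    set v : ℝ := (1 - p) / D s with hv
    have hexp : D s = 1 - p + p * exp s := rfl
    have hsum : u + v = 1 := by
      rw [hu, hv, ← add_div,
        show p * exp s + (1 - p) = D s by rw [hexp]; ring]
      exact div_self hDs.ne'
    have h1 : p * exp s * (1 - p) / (D s) ^ 2 = u * v := by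
      rw [hu, hv]; rw [div_mul_div_comm, ← sq]
    rw [h1]
    nlinarith [sq_nonneg (u - v)]
  have hgmono : Monotone g := by
    apply monotone_of_deriv_nonneg (fun s => (hg s).differentiableAt)
    intro s; rw [(hg s).deriv]; exact hg' s
  have hg0 : g 0 = 0 := by
    simp only [hgdef, hDdef]
    simp
  have hfdiff : Differentiable ℝ f := fun s => (hf s).differentiableAt
  have hf0 : f 0 = 0 := by
    simp only [hfdef, hDdef]
    simp
  have hfnonneg : 0 ≤ f t := by
    rcases le_total 0 t with ht | ht
    · have hmono : MonotoneOn f (Set.Ici 0) := by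
        apply monotoneOn_of_deriv_nonneg (convex_Ici 0) hfdiff.continuous.continuousOn
          hfdiff.differentiableOn
        intro x hx
        rw [(hf x).deriv]
        rw [interior_Ici] at hx
        have := hgmono (le_of_lt hx)
        rw [hg0] at this; exact this
      have := hmono (Set.self_mem_Ici) (Set.mem_Ici.2 ht) ht
      rw [hf0] at this; exact this
    · have hanti : AntitoneOn f (Set.Iic 0) := by
        apply antitoneOn_of_deriv_nonpos (convex_Iic 0) hfdiff.continuous.continuousOn
          hfdiff.differentiableOn
        intro x hx
        rw [(hf x).deriv]
        rw [interior_Iic] at hx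
        have := hgmono (le_of_lt hx)
        rw [hg0] at this; exact this
      have := hanti (Set.mem_Iic.2 ht) (Set.self_mem_Iic) ht
      rw [hf0] at this; exact this
  have hDt := hD t
  calc (1 - p + p * exp t) * exp (-(t * p)) = exp (Real.log (D t) + -(t * p)) := by
        rw [exp_add, Real.exp_log hDt]
    _ ≤ exp (t ^ 2 / 8) := by
        apply exp_le_exp.2
        simp only [hfdef] at hfnonneg
        linarith

lemma wass_le_of_coupling {X : Type*} [Fintype X] [DecidableEq X] {μ ν : X → ℝ}
    (Γ : X × X → ℝ) (hΓ : IsCoupling μ ν Γ) :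
    Wass hamming μ ν ≤ ∑ p : X × X, Γ p * hamming p.1 p.2 := by
  apply csInf_le
  · refine ⟨0, fun c hc => ?_⟩
    obtain ⟨Γ', hΓ', rfl⟩ := hc
    apply Finset.sum_nonneg
    intro p _
    exact mul_nonneg (hΓ'.1 p) (by unfold hamming; split <;> norm_num)
  · exact ⟨Γ, hΓ, rfl⟩

lemma wass_le_tv {X : Type*} [Fintype X] [DecidableEq X] {μ ν : X → ℝ}
    (hμ : IsProbVec μ) (hν : IsProbVec ν) :
    Wass hamming μ ν ≤ (1 / 2) * ∑ x, |μ x - ν x| := by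
  set m : X → ℝ := fun x => min (μ x) (ν x) with hm
  set s : ℝ := (1 / 2) * ∑ x, |μ x - ν x| with hs
  have habs : ∀ x, |μ x - ν x| = μ x + ν x - 2 * m x := by
    intro x
    rcases le_total (μ x) (ν x) with h | h
    · rw [abs_of_nonpos (by linarith), hm]; simp only [min_eq_left h]; ring
    · rw [abs_of_nonneg (by linarith), hm]; simp only [min_eq_right h]; ring
  have hsum_m : ∑ x, m x = 1 - s := by
    have h1 : ∑ x, |μ x - ν x| = ∑ x, (μ x + ν x - 2 * m x) :=
      Finset.sum_congr rfl fun x _ => habs x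
    rw [hs, h1]
    simp only [Finset.sum_sub_distrib, Finset.sum_add_distrib, hμ.2, hν.2, ← Finset.mul_sum]
    ring
  have hm0 : ∀ x, 0 ≤ m x := fun x => le_min (hμ.1 x) (hν.1 x)
  have hμm : ∀ x, 0 ≤ μ x - m x := fun x => by
    simp [hm, sub_nonneg, min_le_left]
  have hνm : ∀ x, 0 ≤ ν x - m x := fun x => by
    simp [hm, sub_nonneg, min_le_right]
  have hsumμm : ∑ x, (μ x - m x) = s := by
    rw [Finset.sum_sub_distrib, hμ.2, hsum_m]; ring
  have hsumνm : ∑ x, (ν x - m x) = s := by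
    rw [Finset.sum_sub_distrib, hν.2, hsum_m]; ring
  have hs0 : 0 ≤ s := by rw [hs]; positivity
  rcases eq_or_lt_of_le hs0 with hzero | hpos
  · -- s = 0 : μ = ν, diagonal coupling
    have hμν : ∀ x, μ x = ν x := by
      intro x
      have h0 : ∑ x, |μ x - ν x| = 0 := by rw [hs] at hzero; linarith
      have h1 := (Finset.sum_eq_zero_iff_of_nonneg
        (fun x _ => abs_nonneg (μ x - ν x))).1 h0 x (mem_univ x)
      have := abs_eq_zero.1 h1
      linarith
    set Γ : X × X → ℝ := fun p => if p.1 = p.2 then μ p.1 else 0 with hΓ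
    have hc : IsCoupling μ ν Γ := by
      refine ⟨fun p => ?_, fun y => ?_, fun z => ?_⟩
      · simp only [hΓ]; split
        · exact hμ.1 _
        · exact le_refl 0
      · simp [hΓ]
      · simp only [hΓ]
        rw [show (∑ y, if y = z then μ y else 0) = ∑ y, if y = z then μ z else 0 from
          Finset.sum_congr rfl fun y _ => by split <;> first | (rename_i h; rw [h]) | rfl]
        rw [Finset.sum_ite_eq' univ z (fun _ => μ z)]
        simp [hμν z]
    have hcost : ∑ p : X × X, Γ p * hamming p.1 p.2 = 0 := by
      apply Finset.sum_eq_zero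
      intro p _
      simp only [hΓ, hamming]
      by_cases h : p.1 = p.2 <;> simp [h]
    have := wass_le_of_coupling Γ hc
    rw [hcost] at this
    exact this.trans hs0
  · -- s > 0 : mixed coupling
    set Γ : X × X → ℝ := fun p =>
      (if p.1 = p.2 then m p.1 else 0) + (μ p.1 - m p.1) * (ν p.2 - m p.2) / s with hΓ
    have hc : IsCoupling μ ν Γ := by
      refine ⟨fun p => ?_, fun y => ?_, fun z => ?_⟩
      · have h2 : 0 ≤ (μ p.1 - m p.1) * (ν p.2 - m p.2) / s := by
          have := mul_nonneg (hμm p.1) (hνm p.2)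
          positivity
        simp only [hΓ]; split
        · exact add_nonneg (hm0 _) h2
        · simpa using h2
      · simp only [hΓ, Finset.sum_add_distrib]
        rw [Finset.sum_ite_eq univ y (fun _ => m y)]
        simp only [mem_univ, if_true]
        have h3 : ∑ z, (μ y - m y) * (ν z - m z) / s
            = (μ y - m y) * (∑ z, (ν z - m z)) / s := by
          rw [Finset.mul_sum, Finset.sum_div]
        rw [h3, hsumνm, mul_div_assoc, div_self hpos.ne', mul_one]
        ring
      · simp only [hΓ, Finset.sum_add_distrib]
        rw [show (∑ y, if y = z then m y else 0) = ∑ y, if y = z then m z else 0 from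
          Finset.sum_congr rfl fun y _ => by split <;> first | (rename_i h; rw [h]) | rfl]
        rw [Finset.sum_ite_eq' univ z (fun _ => m z)]
        simp only [mem_univ, if_true]
        have h3 : ∑ y, (μ y - m y) * (ν z - m z) / s
            = (∑ y, (μ y - m y)) * (ν z - m z) / s := by
          rw [Finset.sum_mul, Finset.sum_div]
        rw [h3, hsumμm, mul_comm, mul_div_assoc, div_self hpos.ne', mul_one]
        ring
    have hcost : ∑ p : X × X, Γ p * hamming p.1 p.2 ≤ s := by
      have hterm : ∀ p : X × X, Γ p * hamming p.1 p.2
          ≤ (μ p.1 - m p.1) * (ν p.2 - m p.2) / s := by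
        intro p
        simp only [hΓ, hamming]
        by_cases h : p.1 = p.2
        · simp only [h, if_true, if_pos]
          simp [h]
          have := mul_nonneg (hμm p.2) (hνm p.2)
          positivity
        · simp only [h, if_false]
          simp only [if_neg h, mul_one, zero_add, le_refl]
      calc ∑ p : X × X, Γ p * hamming p.1 p.2
          ≤ ∑ p : X × X, (μ p.1 - m p.1) * (ν p.2 - m p.2) / s :=
            Finset.sum_le_sum fun p _ => hterm p
        _ = (∑ y, (μ y - m y)) * (∑ z, (ν z - m z)) / s := by
            rw [Finset.sum_mul_sum, ← Finset.sum_product']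
            rw [Finset.sum_div]
            rfl
        _ = s := by rw [hsumμm, hsumνm, ← sq, sq, mul_div_assoc, div_self hpos.ne', mul_one]
    exact (wass_le_of_coupling Γ hc).trans hcost

lemma tail_bound {X : Type*} [MeasurableSpace X] [MeasurableSingletonClass X]
    [Countable X] [DecidableEq X]
    {Ω : Type*} [MeasurableSpace Ω] (μp : Measure Ω) [IsProbabilityMeasure μp]
    (N : ℕ) (ξ : Fin N → Ω → X) (hmeas : ∀ i, Measurable (ξ i))
    (hindep : iIndepFun ξ μp)
    (y : X) (p : Fin N → ℝ) (hp0 : ∀ i, 0 ≤ p i) (hp1 : ∀ i, p i ≤ 1)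
    (hdist : ∀ i, μp {ω | ξ i ω = y} = ENNReal.ofReal (p i))
    (a : ℝ) (ha : 0 ≤ a) :
    (μp {ω | (N : ℝ) * a ≤ ∑ i, ((if ξ i ω = y then (1:ℝ) else 0) - p i)}).toReal
        ≤ exp (-(2 * N * a ^ 2)) ∧
    (μp {ω | ∑ i, ((if ξ i ω = y then (1:ℝ) else 0) - p i) ≤ -((N : ℝ) * a)}).toReal
        ≤ exp (-(2 * N * a ^ 2)) := by
  classical
  set Zc : Fin N → Ω → ℝ := fun i ω => (if ξ i ω = y then (1:ℝ) else 0) - p i with hZc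
  have hZmeas : ∀ i, Measurable (Zc i) := by
    intro i
    have : Zc i = (fun x : X => (if x = y then (1:ℝ) else 0) - p i) ∘ ξ i := rfl
    rw [this]
    exact (measurable_of_countable _).comp (hmeas i)
  have hindepZ : iIndepFun Zc μp := by
    have := hindep.comp (fun i (x : X) => (if x = y then (1:ℝ) else 0) - p i)
      (fun i => measurable_of_countable _)
    exact this
  -- the exponential as affine function of the indicator
  have hfun : ∀ (i : Fin N) (t : ℝ), (fun ω => exp (t * Zc i ω)) =
      fun ω => exp (-(t * p i)) * (1 + (exp t - 1) *
        ({ω | ξ i ω = y}).indicator (fun _ => (1:ℝ)) ω) := by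
    intro i t
    funext ω
    by_cases h : ξ i ω = y
    · have hω : ω ∈ {ω | ξ i ω = y} := h
      simp only [hZc, h, if_true, Set.indicator_of_mem hω]
      rw [show (1 + (exp t - 1) * 1 : ℝ) = exp t by ring, ← exp_add]
      congr 1
      ring
    · have hω : ω ∉ {ω | ξ i ω = y} := h
      simp only [hZc, h, if_false, Set.indicator_of_notMem hω]
      ring_nf
  have hA : ∀ i, MeasurableSet {ω | ξ i ω = y} := fun i =>
    hmeas i (measurableSet_singleton y)
  have hint_ind : ∀ i, Integrable (({ω | ξ i ω = y}).indicator (fun _ => (1:ℝ))) μp :=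
    fun i => (integrable_const (1:ℝ)).indicator (hA i)
  have hint : ∀ (i : Fin N) (t : ℝ), Integrable (fun ω => exp (t * Zc i ω)) μp := by
    intro i t
    rw [hfun i t]
    exact (((integrable_const (1:ℝ)).add ((hint_ind i).const_mul _)).const_mul _)
  have hind_int : ∀ i, ∫ ω, ({ω | ξ i ω = y}).indicator (fun _ => (1:ℝ)) ω ∂μp = p i := by
    intro i
    rw [integral_indicator_const (1:ℝ) (hA i), measureReal_def, hdist i, smul_eq_mul, mul_one,
      ENNReal.toReal_ofReal (hp0 i)]
  have hmgf : ∀ (i : Fin N) (t : ℝ), mgf (Zc i) μp t ≤ exp (t ^ 2 / 8) := by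
    intro i t
    have hcomp : mgf (Zc i) μp t = exp (-(t * p i)) * (1 + (exp t - 1) * p i) := by
      rw [mgf, hfun i t, integral_const_mul, integral_add (integrable_const _)
        ((hint_ind i).const_mul _), integral_const, integral_const_mul, hind_int i]
      simp
    rw [hcomp]
    calc exp (-(t * p i)) * (1 + (exp t - 1) * p i)
        = (1 - p i + p i * exp t) * exp (-(t * p i)) := by ring
      _ ≤ exp (t ^ 2 / 8) := hoeff_bern (hp0 i) (hp1 i) t
  have hmgf_sum : ∀ t : ℝ, mgf (∑ i, Zc i) μp t ≤ exp (N * (t ^ 2 / 8)) := by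
    intro t
    rw [hindepZ.mgf_sum hZmeas univ]
    calc ∏ i, mgf (Zc i) μp t ≤ ∏ _i : Fin N, exp (t ^ 2 / 8) :=
          Finset.prod_le_prod (fun i _ => mgf_nonneg) (fun i _ => hmgf i t)
      _ = exp (N * (t ^ 2 / 8)) := by
          rw [Finset.prod_const, ← Real.exp_nat_mul]
          simp
  have hint_sum : ∀ t : ℝ, Integrable (fun ω => exp (t * (∑ i, Zc i) ω)) μp := fun t =>
    hindepZ.integrable_exp_mul_sum hZmeas (fun i _ => hint i t)
  have hset1 : {ω | (N : ℝ) * a ≤ ∑ i, ((if ξ i ω = y then (1:ℝ) else 0) - p i)}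
      = {ω | (N : ℝ) * a ≤ (∑ i, Zc i) ω} := by
    ext ω; simp [hZc, Finset.sum_apply]
  have hset2 : {ω | ∑ i, ((if ξ i ω = y then (1:ℝ) else 0) - p i) ≤ -((N : ℝ) * a)}
      = {ω | (∑ i, Zc i) ω ≤ -((N : ℝ) * a)} := by
    ext ω; simp [hZc, Finset.sum_apply]
  constructor
  · rw [hset1]
    calc (μp {ω | (N : ℝ) * a ≤ (∑ i, Zc i) ω}).toReal
        ≤ exp (-(4 * a) * ((N : ℝ) * a)) * mgf (∑ i, Zc i) μp (4 * a) :=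
          measure_ge_le_exp_mul_mgf ((N : ℝ) * a) (by positivity) (hint_sum (4 * a))
      _ ≤ exp (-(4 * a) * ((N : ℝ) * a)) * exp (N * ((4 * a) ^ 2 / 8)) := by
          have := hmgf_sum (4 * a)
          gcongr
      _ = exp (-(2 * N * a ^ 2)) := by
          rw [← exp_add]
          congr 1
          ring
  · rw [hset2]
    calc (μp {ω | (∑ i, Zc i) ω ≤ -((N : ℝ) * a)}).toReal
        ≤ exp (-(-(4 * a)) * (-((N : ℝ) * a))) * mgf (∑ i, Zc i) μp (-(4 * a)) :=
          measure_le_le_exp_mul_mgf (-((N : ℝ) * a)) (by simp; positivity)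
            (hint_sum (-(4 * a)))
      _ ≤ exp (-(-(4 * a)) * (-((N : ℝ) * a))) * exp (N * ((-(4 * a)) ^ 2 / 8)) := by
          have := hmgf_sum (-(4 * a))
          gcongr
      _ = exp (-(2 * N * a ^ 2)) := by
          rw [← exp_add]
          congr 1
          ring

end aux

/-- High-confidence Wasserstein (Hamming, i.e. total-variation) bound between the empirical
distribution and the averaged true distribution. -/
theorem wasserstein_empirical_high_confidence
    {X : Type*} [Fintype X] [Nonempty X] [DecidableEq X]
    [MeasurableSpace X] [MeasurableSingletonClass X]
    {Ω : Type*} [MeasurableSpace Ω] (μp : Measure Ω) [IsProbabilityMeasure μp]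
    (N : ℕ) (hN : 0 < N)
    (ξ : Fin N → Ω → X) (hmeas : ∀ i, Measurable (ξ i))
    (hindep : iIndepFun ξ μp)
    (P : Fin N → X → ℝ) (hP : ∀ i, IsProbVec (P i))
    (hdist : ∀ i y, μp {ω | ξ i ω = y} = ENNReal.ofReal (P i y))
    (β : ℝ) (hβ : β ∈ Set.Ioo (0 : ℝ) 1)
    (ε ρ : ℝ)
    (hε : ε = Real.sqrt (Real.log (2 * (Fintype.card X : ℝ) / β) / (2 * (N : ℝ))))
    (hρ : ρ = ((Fintype.card X : ℝ) / 2) * ε) :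
    ENNReal.ofReal (1 - β) ≤
      μp {ω | Wass hamming
          (fun y => (1 / (N : ℝ)) * ∑ i, if ξ i ω = y then (1 : ℝ) else 0)
          (fun y => (1 / (N : ℝ)) * ∑ i, P i y) ≤ ρ} := by
  classical
  obtain ⟨hβ0, hβ1⟩ := hβ
  set K : ℕ := Fintype.card X with hK
  have hK1 : 1 ≤ K := Fintype.card_pos
  have hKR : (1 : ℝ) ≤ (K : ℝ) := by exact_mod_cast hK1
  have hNR : (0 : ℝ) < (N : ℝ) := by exact_mod_cast hN
  have harg : (1 : ℝ) ≤ 2 * (K : ℝ) / β := by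
    rw [le_div_iff₀ hβ0]
    nlinarith
  have hargpos : (0 : ℝ) < 2 * (K : ℝ) / β := by positivity
  have hlog : 0 ≤ Real.log (2 * (K : ℝ) / β) := Real.log_nonneg harg
  have hε0 : 0 ≤ ε := hε ▸ Real.sqrt_nonneg _
  have hε2 : ε ^ 2 = Real.log (2 * (K : ℝ) / β) / (2 * (N : ℝ)) := by
    rw [hε, Real.sq_sqrt (by positivity)]
  have hexp : Real.exp (-(2 * (N : ℝ) * ε ^ 2)) = β / (2 * (K : ℝ)) := by
    rw [hε2, show -(2 * (N : ℝ) * (Real.log (2 * (K : ℝ) / β) / (2 * (N : ℝ))))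
      = -Real.log (2 * (K : ℝ) / β) by field_simp]
    rw [Real.exp_neg, Real.exp_log hargpos, inv_div]
  -- per-coordinate bad events
  set S : X → Ω → ℝ := fun y ω => ∑ i, ((if ξ i ω = y then (1:ℝ) else 0) - P i y) with hS
  have hSmeas : ∀ y, Measurable (S y) := by
    intro y
    apply Finset.measurable_sum
    intro i _
    have : (fun ω => (if ξ i ω = y then (1:ℝ) else 0) - P i y)
        = (fun x : X => (if x = y then (1:ℝ) else 0) - P i y) ∘ ξ i := rfl
    rw [this]
    exact (measurable_of_countable _).comp (hmeas i)
  set U : X → Set Ω := fun y => {ω | (N : ℝ) * ε ≤ S y ω} with hU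
  set L : X → Set Ω := fun y => {ω | S y ω ≤ -((N : ℝ) * ε)} with hL
  have hp1 : ∀ (i : Fin N) (y : X), P i y ≤ 1 := by
    intro i y
    calc P i y ≤ ∑ x, P i x := Finset.single_le_sum (fun x _ => (hP i).1 x) (mem_univ y)
      _ = 1 := (hP i).2
  have htail : ∀ y : X, (μp (U y)).toReal ≤ β / (2 * (K : ℝ)) ∧
      (μp (L y)).toReal ≤ β / (2 * (K : ℝ)) := by
    intro y
    have := tail_bound μp N ξ hmeas hindep y (fun i => P i y)
      (fun i => (hP i).1 y) (fun i => hp1 i y) (fun i => hdist i y) ε hε0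
    rw [hexp] at this
    exact this
  have hmeasU : ∀ y, MeasurableSet (U y) :=
    fun y => measurableSet_le measurable_const (hSmeas y)
  have hmeasL : ∀ y, MeasurableSet (L y) :=
    fun y => measurableSet_le (hSmeas y) measurable_const
  have hUb : ∀ y, μp (U y) ≤ ENNReal.ofReal (β / (2 * (K : ℝ))) := by
    intro y
    rw [← ENNReal.ofReal_toReal (measure_ne_top μp (U y))]
    exact ENNReal.ofReal_le_ofReal (htail y).1
  have hLb : ∀ y, μp (L y) ≤ ENNReal.ofReal (β / (2 * (K : ℝ))) := by
    intro y
    rw [← ENNReal.ofReal_toReal (measure_ne_top μp (L y))]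
    exact ENNReal.ofReal_le_ofReal (htail y).2
  set B : Set Ω := ⋃ y : X, (U y ∪ L y) with hB
  have hmeasB : MeasurableSet B :=
    MeasurableSet.iUnion fun y => (hmeasU y).union (hmeasL y)
  have hμB : μp B ≤ ENNReal.ofReal β := by
    calc μp B ≤ ∑' y : X, μp (U y ∪ L y) := measure_iUnion_le _
      _ = ∑ y : X, μp (U y ∪ L y) := tsum_fintype _
      _ ≤ ∑ y : X, ENNReal.ofReal (β / (K : ℝ)) := by
          apply Finset.sum_le_sum
          intro y _
          calc μp (U y ∪ L y) ≤ μp (U y) + μp (L y) := measure_union_le _ _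
            _ ≤ ENNReal.ofReal (β / (2 * (K : ℝ))) + ENNReal.ofReal (β / (2 * (K : ℝ))) :=
                add_le_add (hUb y) (hLb y)
            _ = ENNReal.ofReal (β / (K : ℝ)) := by
                rw [← ENNReal.ofReal_add (by positivity) (by positivity)]
                congr 1
                field_simp
                ring
      _ = ENNReal.ofReal β := by
          rw [Finset.sum_const, Finset.card_univ, ← hK, nsmul_eq_mul,
            ← ENNReal.ofReal_natCast K, ← ENNReal.ofReal_mul (by positivity)]
          congr 1
          field_simp
  -- event inclusion
  have hsub : Bᶜ ⊆ {ω | Wass hamming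
          (fun y => (1 / (N : ℝ)) * ∑ i, if ξ i ω = y then (1 : ℝ) else 0)
          (fun y => (1 / (N : ℝ)) * ∑ i, P i y) ≤ ρ} := by
    intro ω hω
    simp only [hB, Set.compl_iUnion, Set.mem_iInter, Set.mem_compl_iff, Set.mem_union,
      not_or] at hω
    have hdev : ∀ y : X, |(1 / (N : ℝ)) * ∑ i, (if ξ i ω = y then (1:ℝ) else 0)
        - (1 / (N : ℝ)) * ∑ i, P i y| ≤ ε := by
      intro y
      obtain ⟨hu, hl⟩ := hω y
      simp only [hU, Set.mem_setOf_eq, not_le] at hu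
      simp only [hL, Set.mem_setOf_eq, not_le] at hl
      have habs : |S y ω| ≤ (N : ℝ) * ε := abs_le.2 ⟨hl.le, hu.le⟩
      have heq : (1 / (N : ℝ)) * ∑ i, (if ξ i ω = y then (1:ℝ) else 0)
          - (1 / (N : ℝ)) * ∑ i, P i y = (1 / (N : ℝ)) * S y ω := by
        rw [hS]
        simp only [Finset.sum_sub_distrib]
        ring
      rw [heq, abs_mul, abs_of_nonneg (by positivity : (0:ℝ) ≤ 1 / (N : ℝ))]
      calc (1 / (N : ℝ)) * |S y ω| ≤ (1 / (N : ℝ)) * ((N : ℝ) * ε) := by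
            gcongr
        _ = ε := by field_simp
    have hprob1 : IsProbVec (fun y => (1 / (N : ℝ)) * ∑ i, if ξ i ω = y then (1:ℝ) else 0) := by
      constructor
      · intro y
        have : (0:ℝ) ≤ ∑ i, (if ξ i ω = y then (1:ℝ) else 0) :=
          Finset.sum_nonneg fun i _ => by split <;> norm_num
        positivity
      · rw [← Finset.mul_sum, Finset.sum_comm]
        have : ∀ i : Fin N, ∑ y, (if ξ i ω = y then (1:ℝ) else 0) = 1 := by
          intro i
          rw [Finset.sum_ite_eq univ (ξ i ω) (fun _ => (1:ℝ))]
          simp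
        rw [Finset.sum_congr rfl fun i _ => this i, Finset.sum_const, Finset.card_univ,
          Fintype.card_fin, nsmul_eq_mul, mul_one]
        field_simp
    have hprob2 : IsProbVec (fun y => (1 / (N : ℝ)) * ∑ i, P i y) := by
      constructor
      · intro y
        have : (0:ℝ) ≤ ∑ i, P i y := Finset.sum_nonneg fun i _ => (hP i).1 y
        positivity
      · rw [← Finset.mul_sum, Finset.sum_comm]
        rw [Finset.sum_congr rfl fun i _ => (hP i).2, Finset.sum_const, Finset.card_univ,
          Fintype.card_fin, nsmul_eq_mul, mul_one]
        field_simp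
    have hwass := wass_le_tv hprob1 hprob2
    refine le_trans hwass ?_
    calc (1 / 2) * ∑ y, |(1 / (N : ℝ)) * ∑ i, (if ξ i ω = y then (1:ℝ) else 0)
          - (1 / (N : ℝ)) * ∑ i, P i y|
        ≤ (1 / 2) * ∑ _y : X, ε := by
          gcongr with y hy
          exact hdev y
      _ = ρ := by
          rw [Finset.sum_const, Finset.card_univ, ← hK, nsmul_eq_mul, hρ]
          ring
  calc ENNReal.ofReal (1 - β) = 1 - ENNReal.ofReal β := by
        rw [ENNReal.ofReal_sub 1 hβ0.le, ENNReal.ofReal_one]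
    _ ≤ 1 - μp B := tsub_le_tsub_left hμB 1
    _ = μp Bᶜ := (prob_compl_eq_one_sub hmeasB).symm
    _ ≤ _ := measure_mono hsub
end

section
/- Finite-horizon expression of the robust safety function (Lemma 1): in the finite time-inhomogeneous Markov chain setting with rectangular Wasserstein ambiguity sets, for every t ∈ {0, …, T_max − 1} and x ∈ H, the robust safety function satisfies S^R(t,x) = sup over all perturbed kernel families (Q_{k,y})_{k ∈ {t,…,T_max−1}, y ∈ H} with W(Q_{k,y}, P_{k,y}) ≤ δ for all (k,y), of the expectation under the chain driven by the kernels Q of the sum Σ_{k=t}^{τ−1} κ(X_k, Q_{k,X_k}) started from X_t = x, where τ is the first hitting time of U ∪ E after t and κ(y, Q) = Σ_{z∈U} Q(z). -/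
open Finset

/-- The probability, under the time-inhomogeneous kernel family `Q`, that the chain started at
state `x` at time `t` hits the unsafe set `U` before hitting the goal set `E` within `n` further
steps (states in `U ∪ E` are treated as absorbing). -/
noncomputable def hitProbAux {X : Type*} [Fintype X] [DecidableEq X] (U E : Finset X)
    (Q : ℕ → X → X → ℝ) : ℕ → ℕ → X → ℝ
  | 0, _, x => if x ∈ U then 1 else 0
  | n + 1, t, x =>
      if x ∈ U then 1
      else if x ∈ E then 0
      else ∑ y, Q t x y * hitProbAux U E Q n (t + 1) y

/-- The robust safety function: the supremum, over all perturbed kernel families whose rows (for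
living states) lie in the Wasserstein (Hamming) ball of radius `δ` around the nominal rows of `P`,
of the probability of hitting `U` before `E`, started from state `x` at time `t`, with almost-sure
hitting-time bound `Tmax`. -/
noncomputable def robustSafety {X : Type*} [Fintype X] [DecidableEq X] (U E : Finset X)
    (P : ℕ → X → X → ℝ) (δ : ℝ) (Tmax : ℕ) (t : ℕ) (x : X) : ℝ :=
  sSup {s | ∃ Q : ℕ → X → X → ℝ,
    (∀ k y, IsProbVec (Q k y)) ∧
    (∀ k y, y ∉ U → y ∉ E → Wass hamming (Q k y) (P k y) ≤ δ) ∧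
    s = hitProbAux U E Q (Tmax - t) t x}

/-- The expected cumulative cost `E[∑_{k=t}^{τ-1} κ(X_k)]` under the kernel family `Q`, over `n`
remaining steps, where the chain is stopped upon entering `U ∪ E`. -/
noncomputable def expCostAux {X : Type*} [Fintype X] [DecidableEq X] (U E : Finset X)
    (κ : ℕ → X → ℝ) (Q : ℕ → X → X → ℝ) : ℕ → ℕ → X → ℝ
  | 0, _, _ => 0
  | n + 1, t, x =>
      if x ∈ U ∨ x ∈ E then 0
      else κ t x + ∑ y, Q t x y * expCostAux U E κ Q n (t + 1) y

theorem hit_eq_exp {X : Type*} [Fintype X] [DecidableEq X] (U E : Finset X)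
    (hUE : Disjoint U E) (Q : ℕ → X → X → ℝ) : ∀ n t x,
    hitProbAux U E Q n t x =
      expCostAux U E (fun k y => ∑ z ∈ U, Q k y z) Q n t x + (if x ∈ U then 1 else 0) := by
  intro n
  induction n with
  | zero =>
    intro t x
    simp [hitProbAux, expCostAux]
  | succ n ih =>
    intro t x
    by_cases hU : x ∈ U
    · have hE : x ∉ E := fun hE => (Finset.disjoint_left.mp hUE hU) hE
      simp [hitProbAux, expCostAux, hU]
    · by_cases hE : x ∈ E
      · simp [hitProbAux, expCostAux, hU, hE]
      · simp only [hitProbAux, expCostAux, hU, hE, if_false, or_self]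
        have : ∀ y, Q t x y * hitProbAux U E Q n (t + 1) y =
            Q t x y * expCostAux U E (fun k y => ∑ z ∈ U, Q k y z) Q n (t + 1) y +
            (if y ∈ U then Q t x y else 0) := by
          intro y
          rw [ih]
          ring_nf
          by_cases hy : y ∈ U <;> simp [hy] <;> ring
        rw [Finset.sum_congr rfl fun y _ => this y, Finset.sum_add_distrib,
          Finset.sum_ite_mem, Finset.univ_inter]
        ring

/-- Finite-horizon expression of the robust safety function (Lemma 1): the robust safety function
equals the worst-case expected sum of the one-step stage costs `κ(y,Q) = ∑_{z ∈ U} Q z` up to the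
hitting time of `U ∪ E`. -/
theorem robust_safety_finite_horizon
    {X : Type*} [Fintype X] [DecidableEq X]
    (U E : Finset X) (hUE : Disjoint U E)
    (Tmax : ℕ) (P : ℕ → X → X → ℝ) (hP : ∀ k y, IsProbVec (P k y))
    (δ : ℝ) (hδ : 0 ≤ δ)
    (t : ℕ) (ht : t < Tmax) (x : X) (hxU : x ∉ U) (hxE : x ∉ E) :
    robustSafety U E P δ Tmax t x =
      sSup {s | ∃ Q : ℕ → X → X → ℝ,
        (∀ k y, IsProbVec (Q k y)) ∧
        (∀ k y, y ∉ U → y ∉ E → Wass hamming (Q k y) (P k y) ≤ δ) ∧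
        s = expCostAux U E (fun k y => ∑ z ∈ U, Q k y z) Q (Tmax - t) t x} := by
  unfold robustSafety
  congr 1
  ext s
  constructor
  · rintro ⟨Q, h1, h2, rfl⟩
    exact ⟨Q, h1, h2, by rw [hit_eq_exp U E hUE Q, if_neg hxU, add_zero]⟩
  · rintro ⟨Q, h1, h2, rfl⟩
    exact ⟨Q, h1, h2, by rw [hit_eq_exp U E hUE Q, if_neg hxU, add_zero]⟩
end

section
/- Dynamic-programming recursion for the robust safety function (Lemma 2): in the finite time-inhomogeneous Markov chain setting with rectangular Wasserstein ambiguity sets, for every t ∈ {0, …, T_max − 1} and x ∈ H, S^R(t,x) = sup over probability vectors Q on X with W(Q, P_{t,x}) ≤ δ of [ Σ_{z∈U} Q(z) + Σ_{y∈H} S^R(t+1, y) Q(y) ], with the convention S^R(t', y) = 0 for y ∈ U ∪ E (terminal states contribute no further cost) and S^R(T_max, ·) = 0. -/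
open Finset

section Aux

variable {X : Type*} [Fintype X] [DecidableEq X]

lemma hamming_nonneg (x y : X) : 0 ≤ hamming x y := by
  unfold hamming; split <;> norm_num

lemma wass_self_le {μ : X → ℝ} (hμ : ∀ x, 0 ≤ μ x) {δ : ℝ} (hδ : 0 ≤ δ) :
    Wass hamming μ μ ≤ δ := by
  have h0 : (0:ℝ) ∈ {c | ∃ Γ : X × X → ℝ, IsCoupling μ μ Γ ∧
      c = ∑ p : X × X, Γ p * hamming p.1 p.2} := by
    refine ⟨fun p => if p.1 = p.2 then μ p.1 else 0, ⟨?_, ?_, ?_⟩, ?_⟩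
    · intro p; dsimp only; split
      · exact hμ _
      · exact le_refl 0
    · intro y; simp
    · intro z; simp
    · symm; apply Finset.sum_eq_zero; intro p _
      by_cases h : p.1 = p.2 <;> simp [hamming, h]
  have hbdd : BddBelow {c | ∃ Γ : X × X → ℝ, IsCoupling μ μ Γ ∧
      c = ∑ p : X × X, Γ p * hamming p.1 p.2} := by
    refine ⟨0, ?_⟩
    rintro c ⟨Γ, hΓ, rfl⟩
    exact Finset.sum_nonneg fun p _ => mul_nonneg (hΓ.1 p) (hamming_nonneg _ _)
  exact le_trans (csInf_le hbdd h0) hδ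

/-- The deterministic dynamic-programming value function. -/
noncomputable def dpVal (U E : Finset X) (P : ℕ → X → X → ℝ) (δ : ℝ) : ℕ → ℕ → X → ℝ
  | 0, _, x => if x ∈ U then 1 else 0
  | n + 1, t, x =>
      if x ∈ U then 1
      else if x ∈ E then 0
      else sSup {s | ∃ Q : X → ℝ, IsProbVec Q ∧ Wass hamming Q (P t x) ≤ δ ∧
        s = ∑ y, Q y * dpVal U E P δ n (t + 1) y}

lemma dpVal_zero (U E : Finset X) (P : ℕ → X → X → ℝ) (δ : ℝ) (t : ℕ) (x : X) :
    dpVal U E P δ 0 t x = if x ∈ U then 1 else 0 := rfl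

lemma dpVal_succ (U E : Finset X) (P : ℕ → X → X → ℝ) (δ : ℝ) (n t : ℕ) (x : X) :
    dpVal U E P δ (n + 1) t x =
      if x ∈ U then 1
      else if x ∈ E then 0
      else sSup {s | ∃ Q : X → ℝ, IsProbVec Q ∧ Wass hamming Q (P t x) ≤ δ ∧
        s = ∑ y, Q y * dpVal U E P δ n (t + 1) y} := rfl

lemma prob_sum_bounds {Q g : X → ℝ} (hQ : IsProbVec Q) (hg0 : ∀ y, 0 ≤ g y)
    (hg1 : ∀ y, g y ≤ 1) : 0 ≤ ∑ y, Q y * g y ∧ ∑ y, Q y * g y ≤ 1 := by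
  constructor
  · exact Finset.sum_nonneg fun y _ => mul_nonneg (hQ.1 y) (hg0 y)
  · calc ∑ y, Q y * g y ≤ ∑ y, Q y :=
          Finset.sum_le_sum fun y _ => mul_le_of_le_one_right (hQ.1 y) (hg1 y)
      _ = 1 := hQ.2

variable {U E : Finset X} {P : ℕ → X → X → ℝ} {δ : ℝ}

lemma dpVal_bounds (hP : ∀ k y, IsProbVec (P k y)) (hδ : 0 ≤ δ) :
    ∀ n t x, 0 ≤ dpVal U E P δ n t x ∧ dpVal U E P δ n t x ≤ 1 := by
  intro n
  induction n with
  | zero =>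
    intro t x
    rw [dpVal_zero]
    split <;> norm_num
  | succ n ih =>
    intro t x
    rw [dpVal_succ]
    by_cases hxU : x ∈ U
    · simp [hxU]
    by_cases hxE : x ∈ E
    · simp [hxU, hxE]
    rw [if_neg hxU, if_neg hxE]
    have hmem : (∑ y, P t x y * dpVal U E P δ n (t + 1) y) ∈
        {s | ∃ Q : X → ℝ, IsProbVec Q ∧ Wass hamming Q (P t x) ≤ δ ∧
          s = ∑ y, Q y * dpVal U E P δ n (t + 1) y} :=
      ⟨P t x, hP t x, wass_self_le (hP t x).1 hδ, rfl⟩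
    have hbdd : BddAbove {s | ∃ Q : X → ℝ, IsProbVec Q ∧ Wass hamming Q (P t x) ≤ δ ∧
        s = ∑ y, Q y * dpVal U E P δ n (t + 1) y} := by
      refine ⟨1, ?_⟩
      rintro s ⟨Q, hQ, _, rfl⟩
      exact (prob_sum_bounds hQ (fun y => (ih (t+1) y).1) (fun y => (ih (t+1) y).2)).2
    constructor
    · refine le_trans ?_ (le_csSup hbdd hmem)
      exact (prob_sum_bounds (hP t x) (fun y => (ih (t+1) y).1) (fun y => (ih (t+1) y).2)).1
    · refine csSup_le ⟨_, hmem⟩ ?_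
      rintro s ⟨Q, hQ, _, rfl⟩
      exact (prob_sum_bounds hQ (fun y => (ih (t+1) y).1) (fun y => (ih (t+1) y).2)).2

lemma dpVal_of_mem_U {x : X} (hx : x ∈ U) (n t : ℕ) : dpVal U E P δ n t x = 1 := by
  cases n <;> simp [dpVal_zero, dpVal_succ, hx]

lemma dpVal_of_mem_E (hUE : Disjoint U E) {x : X} (hx : x ∈ E) (n t : ℕ) :
    dpVal U E P δ n t x = 0 := by
  have hxU : x ∉ U := fun h => Finset.disjoint_left.mp hUE h hx
  cases n <;> simp [dpVal_zero, dpVal_succ, hx, hxU]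

lemma hit_bounds {Q : ℕ → X → X → ℝ} (hQ : ∀ k y, IsProbVec (Q k y)) :
    ∀ n t x, 0 ≤ hitProbAux U E Q n t x ∧ hitProbAux U E Q n t x ≤ 1 := by
  intro n
  induction n with
  | zero =>
    intro t x
    rw [hitProbAux]
    split <;> norm_num
  | succ n ih =>
    intro t x
    rw [hitProbAux]
    by_cases hxU : x ∈ U
    · simp [hxU]
    by_cases hxE : x ∈ E
    · simp [hxU, hxE]
    rw [if_neg hxU, if_neg hxE]
    exact prob_sum_bounds (hQ t x) (fun y => (ih (t+1) y).1) (fun y => (ih (t+1) y).2)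

lemma hit_congr {Q Q' : ℕ → X → X → ℝ} :
    ∀ n t, (∀ k, t ≤ k → Q k = Q' k) → ∀ x,
      hitProbAux U E Q n t x = hitProbAux U E Q' n t x := by
  intro n
  induction n with
  | zero => intro t _ x; rw [hitProbAux, hitProbAux]
  | succ n ih =>
    intro t h x
    rw [hitProbAux, hitProbAux]
    by_cases hxU : x ∈ U
    · simp [hxU]
    by_cases hxE : x ∈ E
    · simp [hxU, hxE]
    rw [if_neg hxU, if_neg hxE, if_neg hxU, if_neg hxE]
    refine Finset.sum_congr rfl fun y _ => ?_
    rw [h t le_rfl, ih (t+1) (fun k hk => h k (by omega)) y]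

lemma hit_le_dpVal (hP : ∀ k y, IsProbVec (P k y)) (hδ : 0 ≤ δ)
    {Q : ℕ → X → X → ℝ} (hQ : ∀ k y, IsProbVec (Q k y))
    (hW : ∀ k y, y ∉ U → y ∉ E → Wass hamming (Q k y) (P k y) ≤ δ) :
    ∀ n t x, hitProbAux U E Q n t x ≤ dpVal U E P δ n t x := by
  intro n
  induction n with
  | zero => intro t x; rw [hitProbAux, dpVal_zero]
  | succ n ih =>
    intro t x
    rw [hitProbAux, dpVal_succ]
    by_cases hxU : x ∈ U
    · simp [hxU]
    by_cases hxE : x ∈ E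
    · simp [hxU, hxE]
    rw [if_neg hxU, if_neg hxE, if_neg hxU, if_neg hxE]
    have hbdd : BddAbove {s | ∃ R : X → ℝ, IsProbVec R ∧ Wass hamming R (P t x) ≤ δ ∧
        s = ∑ y, R y * dpVal U E P δ n (t + 1) y} := by
      refine ⟨1, ?_⟩
      rintro s ⟨R, hR, _, rfl⟩
      exact (prob_sum_bounds hR (fun y => (dpVal_bounds hP hδ n (t+1) y).1)
        (fun y => (dpVal_bounds hP hδ n (t+1) y).2)).2
    refine le_trans ?_ (le_csSup hbdd ⟨Q t x, hQ t x, hW t x hxU hxE, rfl⟩)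
    exact Finset.sum_le_sum fun y _ =>
      mul_le_mul_of_nonneg_left (ih (t+1) y) ((hQ t x).1 y)

end Aux

section Main

variable {X : Type*} [Fintype X] [DecidableEq X]
variable {U E : Finset X} {P : ℕ → X → X → ℝ} {δ : ℝ}

lemma greedy (hP : ∀ k y, IsProbVec (P k y)) (hδ : 0 ≤ δ) (Tmax : ℕ)
    {ε : ℝ} (hε : 0 < ε) :
    ∃ F : ℕ → X → X → ℝ, (∀ k y, IsProbVec (F k y)) ∧
      (∀ k y, Wass hamming (F k y) (P k y) ≤ δ) ∧
      (∀ n t, t + n = Tmax → ∀ x,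
        dpVal U E P δ n t x - n * ε ≤ hitProbAux U E F n t x) := by
  have hex : ∀ k z, ∃ R : X → ℝ, IsProbVec R ∧ Wass hamming R (P k z) ≤ δ ∧
      (k < Tmax → z ∉ U → z ∉ E →
        dpVal U E P δ (Tmax - k) k z - ε <
          ∑ y, R y * dpVal U E P δ (Tmax - (k + 1)) (k + 1) y) := by
    intro k z
    by_cases h : k < Tmax ∧ z ∉ U ∧ z ∉ E
    · obtain ⟨hk, hzU, hzE⟩ := h
      have hm : Tmax - k = (Tmax - (k + 1)) + 1 := by omega
      set m := Tmax - (k + 1) with hmdef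
      set S : Set ℝ := {s | ∃ Q : X → ℝ, IsProbVec Q ∧ Wass hamming Q (P k z) ≤ δ ∧
        s = ∑ y, Q y * dpVal U E P δ m (k + 1) y} with hS
      have hrw : dpVal U E P δ (Tmax - k) k z = sSup S := by
        rw [hm, dpVal_succ, if_neg hzU, if_neg hzE]
      have hne : S.Nonempty := ⟨_, P k z, hP k z, wass_self_le (hP k z).1 hδ, rfl⟩
      have hlt : sSup S - ε < sSup S := sub_lt_self _ hε
      obtain ⟨s, hs, hlt'⟩ := exists_lt_of_lt_csSup hne hlt
      obtain ⟨R, hR1, hR2, rfl⟩ := hs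
      exact ⟨R, hR1, hR2, fun _ _ _ => by rw [hrw]; exact hlt'⟩
    · refine ⟨P k z, hP k z, wass_self_le (hP k z).1 hδ, fun hk hzU hzE => ?_⟩
      exact absurd ⟨hk, hzU, hzE⟩ h
  choose F hF1 hF2 hF3 using hex
  refine ⟨F, hF1, hF2, ?_⟩
  intro n
  induction n with
  | zero =>
    intro t _ x
    rw [hitProbAux, dpVal_zero]
    simp
  | succ n ih =>
    intro t ht x
    have htT : t < Tmax := by omega
    have hnε : (0:ℝ) ≤ (n + 1 : ℕ) * ε := by positivity
    rw [hitProbAux, dpVal_succ]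
    by_cases hxU : x ∈ U
    · simp only [hxU, if_true]; linarith
    by_cases hxE : x ∈ E
    · simp only [hxU, hxE, if_true, if_false]; linarith
    rw [if_neg hxU, if_neg hxE, if_neg hxU, if_neg hxE]
    have h1 : ∀ y, dpVal U E P δ n (t + 1) y - n * ε ≤ hitProbAux U E F n (t + 1) y :=
      fun y => ih (t + 1) (by omega) y
    have h2 : ∑ y, F t x y * (dpVal U E P δ n (t + 1) y - n * ε) ≤
        ∑ y, F t x y * hitProbAux U E F n (t + 1) y :=
      Finset.sum_le_sum fun y _ => mul_le_mul_of_nonneg_left (h1 y) ((hF1 t x).1 y)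
    have h3 : ∑ y, F t x y * (dpVal U E P δ n (t + 1) y - n * ε) =
        (∑ y, F t x y * dpVal U E P δ n (t + 1) y) - n * ε := by
      simp only [mul_sub]
      rw [Finset.sum_sub_distrib, ← Finset.sum_mul, (hF1 t x).2, one_mul]
    have h4 := hF3 t x htT hxU hxE
    have e1 : Tmax - t = n + 1 := by omega
    have e2 : Tmax - (t + 1) = n := by omega
    rw [e1, e2] at h4
    have e3 : dpVal U E P δ (n + 1) t x =
        if x ∈ U then 1 else if x ∈ E then 0 else
          sSup {s | ∃ Q : X → ℝ, IsProbVec Q ∧ Wass hamming Q (P t x) ≤ δ ∧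
            s = ∑ y, Q y * dpVal U E P δ n (t + 1) y} := dpVal_succ U E P δ n t x
    rw [e3, if_neg hxU, if_neg hxE] at h4
    push_cast
    push_cast at h4 ⊢
    linarith [h2, h3, h4]

lemma robust_eq_dp (hP : ∀ k y, IsProbVec (P k y)) (hδ : 0 ≤ δ)
    {Tmax t : ℕ} (ht : t ≤ Tmax) (x : X) :
    robustSafety U E P δ Tmax t x = dpVal U E P δ (Tmax - t) t x := by
  set S : Set ℝ := {s | ∃ Q : ℕ → X → X → ℝ,
    (∀ k y, IsProbVec (Q k y)) ∧
    (∀ k y, y ∉ U → y ∉ E → Wass hamming (Q k y) (P k y) ≤ δ) ∧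
    s = hitProbAux U E Q (Tmax - t) t x} with hS
  have hne : S.Nonempty :=
    ⟨_, fun _ _ => P _ _, by
      refine ⟨fun k y => hP k y, fun k y _ _ => wass_self_le (hP k y).1 hδ, rfl⟩⟩
  have hbdd : BddAbove S := by
    refine ⟨1, ?_⟩
    rintro s ⟨Q, hQ, _, rfl⟩
    exact (hit_bounds hQ _ _ _).2
  have hle : robustSafety U E P δ Tmax t x ≤ dpVal U E P δ (Tmax - t) t x := by
    refine csSup_le hne ?_
    rintro s ⟨Q, hQ, hW, rfl⟩
    exact hit_le_dpVal hP hδ hQ hW _ _ _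
  have hge : dpVal U E P δ (Tmax - t) t x ≤ robustSafety U E P δ Tmax t x := by
    refine le_of_forall_pos_le_add ?_
    intro ε hε
    obtain ⟨c, hc, hcε⟩ : ∃ c : ℝ, 0 < c ∧ ((Tmax - t : ℕ) : ℝ) * c ≤ ε := by
      refine ⟨ε / (Tmax + 1), by positivity, ?_⟩
      have hε' : 0 < ε / (Tmax + 1) := by positivity
      have h1 : ((Tmax - t : ℕ) : ℝ) ≤ (Tmax : ℝ) + 1 := by
        have h2 : (Tmax - t : ℕ) ≤ Tmax := Nat.sub_le _ _
        have h3 := (Nat.cast_le (α := ℝ)).2 h2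
        linarith
      calc ((Tmax - t : ℕ) : ℝ) * (ε / (Tmax + 1))
          ≤ ((Tmax : ℝ) + 1) * (ε / (Tmax + 1)) :=
            mul_le_mul_of_nonneg_right h1 (le_of_lt hε')
        _ = ε := by field_simp
    obtain ⟨F, hF1, hF2, hF3⟩ := greedy hP hδ Tmax hc
    have hkey := hF3 (Tmax - t) t (by omega) x
    have hmem : hitProbAux U E F (Tmax - t) t x ∈ S :=
      ⟨F, hF1, fun k y _ _ => hF2 k y, rfl⟩
    have hsup : hitProbAux U E F (Tmax - t) t x ≤ robustSafety U E P δ Tmax t x :=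
      le_csSup hbdd hmem
    linarith
  linarith

end Main

/-- Dynamic-programming recursion for the robust safety function (Lemma 2). -/
theorem robust_safety_recursion
    {X : Type*} [Fintype X] [DecidableEq X]
    (U E : Finset X) (hUE : Disjoint U E)
    (Tmax : ℕ) (P : ℕ → X → X → ℝ) (hP : ∀ k y, IsProbVec (P k y))
    (δ : ℝ) (hδ : 0 ≤ δ)
    (t : ℕ) (ht : t < Tmax) (x : X) (hxU : x ∉ U) (hxE : x ∉ E) :
    robustSafety U E P δ Tmax t x =
      sSup {s | ∃ Q : X → ℝ, IsProbVec Q ∧ Wass hamming Q (P t x) ≤ δ ∧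
        s = ∑ z ∈ U, Q z +
          ∑ y ∈ Finset.univ \ (U ∪ E), robustSafety U E P δ Tmax (t + 1) y * Q y} := by
  set n := Tmax - (t + 1) with hn
  have e1 : Tmax - t = n + 1 := by omega
  have hsum : ∀ Q : X → ℝ, IsProbVec Q →
      ∑ y, Q y * dpVal U E P δ n (t + 1) y =
        ∑ z ∈ U, Q z +
          ∑ y ∈ Finset.univ \ (U ∪ E), robustSafety U E P δ Tmax (t + 1) y * Q y := by
    intro Q hQ
    have hsplit : ∑ y ∈ Finset.univ \ (U ∪ E), Q y * dpVal U E P δ n (t + 1) y +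
        ∑ y ∈ U ∪ E, Q y * dpVal U E P δ n (t + 1) y =
        ∑ y, Q y * dpVal U E P δ n (t + 1) y :=
      Finset.sum_sdiff (Finset.subset_univ _)
    have hU : ∑ y ∈ U, Q y * dpVal U E P δ n (t + 1) y = ∑ z ∈ U, Q z :=
      Finset.sum_congr rfl fun y hy => by rw [dpVal_of_mem_U hy, mul_one]
    have hE : ∑ y ∈ E, Q y * dpVal U E P δ n (t + 1) y = 0 :=
      Finset.sum_eq_zero fun y hy => by rw [dpVal_of_mem_E hUE hy, mul_zero]
    have hH : ∑ y ∈ Finset.univ \ (U ∪ E), Q y * dpVal U E P δ n (t + 1) y =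
        ∑ y ∈ Finset.univ \ (U ∪ E), robustSafety U E P δ Tmax (t + 1) y * Q y := by
      refine Finset.sum_congr rfl fun y _ => ?_
      rw [robust_eq_dp hP hδ (by omega : t + 1 ≤ Tmax) y, ← hn, mul_comm]
    rw [← hsplit, Finset.sum_union hUE, hU, hE, hH]
    ring
  rw [robust_eq_dp hP hδ (le_of_lt ht) x, e1, dpVal_succ, if_neg hxU, if_neg hxE]
  congr 1
  ext s
  constructor
  · rintro ⟨Q, hQ, hW, rfl⟩
    exact ⟨Q, hQ, hW, hsum Q hQ⟩
  · rintro ⟨Q, hQ, hW, rfl⟩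
    exact ⟨Q, hQ, hW, (hsum Q hQ).symm⟩
end

section
/- Dual form of the robust safety function recursion (Lemma 4): in the finite time-inhomogeneous Markov chain setting with rectangular Wasserstein ambiguity sets, with c(x,y) = 1 if y ∈ U and 0 otherwise and with S^R(t+1,y) = 0 for y ∈ U ∪ E, for every t ∈ {0, …, T_max − 1} and x ∈ H, S^R(t,x) = inf over λ ≥ 0 of [ λ δ + Σ_{y∈X} ( max_{l∈X} ( −λ d(l,y) + c(x,l) + S^R(t+1,l) ) ) P_{t,x}(y) ], where d is the Hamming metric on X. -/
open Finset

namespace RSDual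
set_option linter.unusedSectionVars false

variable {X : Type*} [Fintype X] [DecidableEq X]

lemma hamming_nonneg (x y : X) : 0 ≤ hamming x y := by
  unfold hamming; split <;> norm_num

lemma hamming_le_one (x y : X) : hamming x y ≤ 1 := by
  unfold hamming; split <;> norm_num

lemma hamming_self (x : X) : hamming x x = 0 := by simp [hamming]

lemma hit_zero (U E : Finset X) (Q : ℕ → X → X → ℝ) (t : ℕ) (x : X) :
    hitProbAux U E Q 0 t x = if x ∈ U then 1 else 0 := rfl

lemma hit_succ (U E : Finset X) (Q : ℕ → X → X → ℝ) (n t : ℕ) (x : X) :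
    hitProbAux U E Q (n+1) t x =
      if x ∈ U then 1 else if x ∈ E then 0
      else ∑ y, Q t x y * hitProbAux U E Q n (t + 1) y := rfl

lemma hit_nonneg (U E : Finset X) (Q : ℕ → X → X → ℝ) (hQ : ∀ k y, IsProbVec (Q k y)) :
    ∀ n t x, 0 ≤ hitProbAux U E Q n t x := by
  intro n
  induction n with
  | zero => intro t x; simp only [hit_zero, hit_succ]; split <;> norm_num
  | succ n ih =>
    intro t x
    simp only [hit_zero, hit_succ]
    split
    · norm_num
    split
    · norm_num
    exact Finset.sum_nonneg fun y _ => mul_nonneg ((hQ t x).1 y) (ih (t+1) y)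

lemma hit_le_one (U E : Finset X) (Q : ℕ → X → X → ℝ) (hQ : ∀ k y, IsProbVec (Q k y)) :
    ∀ n t x, hitProbAux U E Q n t x ≤ 1 := by
  intro n
  induction n with
  | zero => intro t x; simp only [hit_zero, hit_succ]; split <;> norm_num
  | succ n ih =>
    intro t x
    simp only [hit_zero, hit_succ]
    split
    · norm_num
    split
    · norm_num
    calc ∑ y, Q t x y * hitProbAux U E Q n (t+1) y
        ≤ ∑ y, Q t x y * 1 :=
          Finset.sum_le_sum fun y _ =>
            mul_le_mul_of_nonneg_left (ih (t+1) y) ((hQ t x).1 y)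
      _ = 1 := by simp [(hQ t x).2]

lemma hit_congr (U E : Finset X) (Q Q' : ℕ → X → X → ℝ) :
    ∀ n t, (∀ k, t ≤ k → Q k = Q' k) → ∀ x,
      hitProbAux U E Q n t x = hitProbAux U E Q' n t x := by
  intro n
  induction n with
  | zero => intro t _ x; rfl
  | succ n ih =>
    intro t h x
    have h2 : ∀ y, hitProbAux U E Q n (t+1) y = hitProbAux U E Q' n (t+1) y :=
      ih (t+1) (fun k hk => h k (le_trans (Nat.le_succ t) hk))
    simp only [hit_succ, h t le_rfl, h2]

lemma hit_of_mem_U (U E : Finset X) (Q : ℕ → X → X → ℝ) (n t : ℕ) {x : X} (hx : x ∈ U) :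
    hitProbAux U E Q n t x = 1 := by
  cases n <;> simp [hit_zero, hit_succ, hx]

lemma hit_of_mem_E (U E : Finset X) (Q : ℕ → X → X → ℝ) (n t : ℕ) {x : X}
    (hxU : x ∉ U) (hx : x ∈ E) : hitProbAux U E Q n t x = 0 := by
  cases n <;> simp [hit_zero, hit_succ, hx, hxU]

lemma hit_living (U E : Finset X) (Q : ℕ → X → X → ℝ) (n t : ℕ) {x : X}
    (hxU : x ∉ U) (hxE : x ∉ E) :
    hitProbAux U E Q (n+1) t x = ∑ y, Q t x y * hitProbAux U E Q n (t+1) y := by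
  simp [hit_succ, hxU, hxE]

lemma coupling_cost_nonneg {Γ : X × X → ℝ} (h : ∀ p, 0 ≤ Γ p) :
    0 ≤ ∑ p : X × X, Γ p * hamming p.1 p.2 :=
  Finset.sum_nonneg fun p _ => mul_nonneg (h p) (hamming_nonneg _ _)

lemma Wass_le_of_coupling {μ ν : X → ℝ} {Γ : X × X → ℝ} (hΓ : IsCoupling μ ν Γ)
    {c : ℝ} (h : ∑ p : X × X, Γ p * hamming p.1 p.2 ≤ c) : Wass hamming μ ν ≤ c := by
  refine le_trans (csInf_le ⟨0, ?_⟩ ⟨Γ, hΓ, rfl⟩) h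
  rintro a ⟨Γ', hΓ', rfl⟩
  exact coupling_cost_nonneg hΓ'.1

lemma prod_coupling {μ ν : X → ℝ} (hμ : IsProbVec μ) (hν : IsProbVec ν) :
    IsCoupling μ ν (fun p => μ p.1 * ν p.2) := by
  refine ⟨fun p => mul_nonneg (hμ.1 _) (hν.1 _), fun y => ?_, fun z => ?_⟩
  · simp only []
    rw [← Finset.mul_sum, hν.2, mul_one]
  · simp only []
    rw [← Finset.sum_mul, hμ.2, one_mul]

lemma exists_coupling_cost_lt {μ ν : X → ℝ} (hμ : IsProbVec μ) (hν : IsProbVec ν)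
    {δ : ℝ} (h : Wass hamming μ ν ≤ δ) {ε : ℝ} (hε : 0 < ε) :
    ∃ Γ : X × X → ℝ, IsCoupling μ ν Γ ∧ ∑ p : X × X, Γ p * hamming p.1 p.2 < δ + ε := by
  have hne : {c | ∃ Γ : X × X → ℝ, IsCoupling μ ν Γ ∧
      c = ∑ p : X × X, Γ p * hamming p.1 p.2}.Nonempty :=
    ⟨_, (fun p => μ p.1 * ν p.2), prod_coupling hμ hν, rfl⟩
  obtain ⟨a, ⟨Γ, hΓ, rfl⟩, ha⟩ := Real.lt_sInf_add_pos hne hε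
  exact ⟨Γ, hΓ, lt_of_lt_of_le ha (by simpa [Wass] using add_le_add_right h ε)⟩

noncomputable def rsA (U E : Finset X) (P : ℕ → X → X → ℝ) (δ : ℝ) (n t : ℕ) (x : X) : ℝ :=
  sSup {s | ∃ Q : ℕ → X → X → ℝ,
    (∀ k y, IsProbVec (Q k y)) ∧
    (∀ k y, y ∉ U → y ∉ E → Wass hamming (Q k y) (P k y) ≤ δ) ∧
    s = hitProbAux U E Q n t x}

lemma Wass_self_le {μ : X → ℝ} (hμ : IsProbVec μ) {δ : ℝ} (hδ : 0 ≤ δ) :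
    Wass hamming μ μ ≤ δ := by
  refine Wass_le_of_coupling (Γ := fun p => if p.1 = p.2 then μ p.1 else 0) ⟨?_, ?_, ?_⟩ ?_
  · intro p; dsimp only; split
    · exact hμ.1 _
    · exact le_refl 0
  · intro y; simp
  · intro z; simp [Finset.sum_ite_eq]
  · calc ∑ p : X × X, (if p.1 = p.2 then μ p.1 else 0) * hamming p.1 p.2
        = ∑ p : X × X, (0:ℝ) := by
          refine Finset.sum_congr rfl fun p _ => ?_
          by_cases h : p.1 = p.2
          · simp [h, hamming_self]
          · simp [h]
      _ ≤ δ := by simpa using hδ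

variable {U E : Finset X} {P : ℕ → X → X → ℝ} {δ : ℝ}

lemma rsA_bddAbove (n t : ℕ) (x : X) :
    BddAbove {s | ∃ Q : ℕ → X → X → ℝ,
      (∀ k y, IsProbVec (Q k y)) ∧
      (∀ k y, y ∉ U → y ∉ E → Wass hamming (Q k y) (P k y) ≤ δ) ∧
      s = hitProbAux U E Q n t x} := by
  refine ⟨1, ?_⟩
  rintro s ⟨Q, hQ1, _, rfl⟩
  exact hit_le_one U E Q hQ1 n t x

lemma hit_le_rsA {Q : ℕ → X → X → ℝ} (hQ1 : ∀ k y, IsProbVec (Q k y))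
    (hQ2 : ∀ k y, y ∉ U → y ∉ E → Wass hamming (Q k y) (P k y) ≤ δ) (n t : ℕ) (x : X) :
    hitProbAux U E Q n t x ≤ rsA U E P δ n t x :=
  le_csSup (rsA_bddAbove n t x) ⟨Q, hQ1, hQ2, rfl⟩

lemma rsA_nonneg (hP : ∀ k y, IsProbVec (P k y)) (hδ : 0 ≤ δ) (n t : ℕ) (x : X) :
    0 ≤ rsA U E P δ n t x :=
  le_trans (hit_nonneg U E P hP n t x)
    (hit_le_rsA hP (fun k y _ _ => Wass_self_le (hP k y) hδ) n t x)

lemma rsA_le_one (hP : ∀ k y, IsProbVec (P k y)) (hδ : 0 ≤ δ) (n t : ℕ) (x : X) :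
    rsA U E P δ n t x ≤ 1 := by
  refine csSup_le ⟨_, P, hP, fun k y _ _ => Wass_self_le (hP k y) hδ, rfl⟩ ?_
  rintro s ⟨Q, hQ1, _, rfl⟩
  exact hit_le_one U E Q hQ1 n t x

lemma rsA_of_mem_E (hP : ∀ k y, IsProbVec (P k y)) (hδ : 0 ≤ δ) (n t : ℕ) {x : X}
    (hxU : x ∉ U) (hxE : x ∈ E) : rsA U E P δ n t x = 0 := by
  refine le_antisymm ?_ ?_
  · refine csSup_le ⟨_, P, hP, fun k y _ _ => Wass_self_le (hP k y) hδ, rfl⟩ ?_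
    rintro s ⟨Q, hQ1, _, rfl⟩
    rw [hit_of_mem_E U E Q n t hxU hxE]
  · exact rsA_nonneg hP hδ n t x

lemma exists_near (hP : ∀ k y, IsProbVec (P k y)) (hδ : 0 ≤ δ) :
    ∀ n t, ∀ ε : ℝ, 0 < ε → ∃ Q : ℕ → X → X → ℝ,
      (∀ k y, IsProbVec (Q k y)) ∧
      (∀ k y, y ∉ U → y ∉ E → Wass hamming (Q k y) (P k y) ≤ δ) ∧
      ∀ y, rsA U E P δ n t y - ε ≤ hitProbAux U E Q n t y := by
  intro n
  induction n with
  | zero =>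
    intro t ε hε
    refine ⟨P, hP, fun k y _ _ => Wass_self_le (hP k y) hδ, fun y => ?_⟩
    have h1 : rsA U E P δ 0 t y ≤ hitProbAux U E P 0 t y := by
      refine csSup_le ⟨_, P, hP, fun k y _ _ => Wass_self_le (hP k y) hδ, rfl⟩ ?_
      rintro s ⟨Q, hQ1, _, rfl⟩
      rw [hit_zero, hit_zero]
    linarith
  | succ n ih =>
    intro t ε hε
    have H : ∀ y : X, ∃ Q : ℕ → X → X → ℝ,
        ((∀ k z, IsProbVec (Q k z)) ∧
        (∀ k z, z ∉ U → z ∉ E → Wass hamming (Q k z) (P k z) ≤ δ)) ∧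
        rsA U E P δ (n+1) t y - ε/2 < hitProbAux U E Q (n+1) t y := by
      intro y
      have hne : {s | ∃ Q : ℕ → X → X → ℝ,
          (∀ k z, IsProbVec (Q k z)) ∧
          (∀ k z, z ∉ U → z ∉ E → Wass hamming (Q k z) (P k z) ≤ δ) ∧
          s = hitProbAux U E Q (n+1) t y}.Nonempty :=
        ⟨_, P, hP, fun k z _ _ => Wass_self_le (hP k z) hδ, rfl⟩
      have hlt : rsA U E P δ (n+1) t y - ε/2 < rsA U E P δ (n+1) t y :=
        sub_lt_self _ (by linarith)
      obtain ⟨s, hsmem, hs⟩ := exists_lt_of_lt_csSup hne hlt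
      obtain ⟨Q, h1, h2, rfl⟩ := hsmem
      exact ⟨Q, ⟨h1, h2⟩, hs⟩
    choose Qc hQc hQclt using H
    obtain ⟨Q₀, h01, h02, h03⟩ := ih (t+1) (ε/2) (by linarith)
    set Qn : ℕ → X → X → ℝ := fun k => if k = t then (fun y => Qc y t y) else Q₀ k with hQn
    have hrow : ∀ y, Qn t y = Qc y t y := by intro y; simp [hQn]
    have htail : ∀ k, t + 1 ≤ k → Qn k = Q₀ k := by
      intro k hk
      have : k ≠ t := by omega
      simp [hQn, this]
    refine ⟨Qn, ?_, ?_, ?_⟩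
    · intro k y
      by_cases hk : k = t
      · rw [hk, hrow]; exact (hQc y).1 t y
      · simp only [hQn, if_neg hk]; exact h01 k y
    · intro k y hyU hyE
      by_cases hk : k = t
      · rw [hk, hrow]; exact (hQc y).2 t y hyU hyE
      · simp only [hQn, if_neg hk]; exact h02 k y hyU hyE
    · intro y
      by_cases hyU : y ∈ U
      · rw [hit_of_mem_U U E Qn (n+1) t hyU]
        have := rsA_le_one (U := U) (E := E) hP hδ (n+1) t y
        linarith
      by_cases hyE : y ∈ E
      · rw [hit_of_mem_E U E Qn (n+1) t hyU hyE, rsA_of_mem_E hP hδ (n+1) t hyU hyE]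
        linarith
      -- living case
      have hkey : hitProbAux U E Qn (n+1) t y
          = ∑ z, Qc y t y z * hitProbAux U E Q₀ n (t+1) z := by
        rw [hit_living U E Qn n t hyU hyE, hrow]
        refine Finset.sum_congr rfl fun z _ => ?_
        rw [hit_congr U E Qn Q₀ n (t+1) htail z]
      have hstep : ∀ z, hitProbAux U E (Qc y) n (t+1) z - ε/2
          ≤ hitProbAux U E Q₀ n (t+1) z := by
        intro z
        have h1 : hitProbAux U E (Qc y) n (t+1) z ≤ rsA U E P δ n (t+1) z :=
          hit_le_rsA (hQc y).1 (hQc y).2 n (t+1) z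
        have h2 := h03 z
        linarith
      have hsum : ∑ z, Qc y t y z * (hitProbAux U E (Qc y) n (t+1) z - ε/2)
          ≤ ∑ z, Qc y t y z * hitProbAux U E Q₀ n (t+1) z :=
        Finset.sum_le_sum fun z _ =>
          mul_le_mul_of_nonneg_left (hstep z) (((hQc y).1 t y).1 z)
      have hexp : ∑ z, Qc y t y z * (hitProbAux U E (Qc y) n (t+1) z - ε/2)
          = hitProbAux U E (Qc y) (n+1) t y - ε/2 := by
        rw [hit_living U E (Qc y) n t hyU hyE]
        rw [Finset.sum_congr rfl (fun z _ => mul_sub (Qc y t y z)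
          (hitProbAux U E (Qc y) n (t+1) z) (ε/2)), Finset.sum_sub_distrib,
          ← Finset.sum_mul, ((hQc y).1 t y).2, one_mul]
      have := hQclt y
      rw [hkey]
      linarith [hsum, hexp ▸ hsum]
    
lemma rowB (hP : ∀ k y, IsProbVec (P k y)) (hδ : 0 ≤ δ) (hUE : Disjoint U E)
    (n t : ℕ) {x : X} (hxU : x ∉ U) (hxE : x ∉ E)
    {q : X → ℝ} (hq : IsProbVec q) (hW : Wass hamming q (P t x) ≤ δ) :
    ∑ z, q z * (if z ∈ U then 1 else if z ∈ E then 0 else rsA U E P δ n (t+1) z)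
      ≤ rsA U E P δ (n+1) t x := by
  refine le_of_forall_pos_le_add ?_
  intro ε hε
  obtain ⟨Q₀, h01, h02, h03⟩ := exists_near hP hδ n (t+1) ε hε
  set Qn : ℕ → X → X → ℝ :=
    fun k => if k = t then (fun y => if y = x then q else P t y) else Q₀ k with hQn
  have hrow : Qn t x = q := by simp [hQn]
  have htail : ∀ k, t + 1 ≤ k → Qn k = Q₀ k := by
    intro k hk
    have : k ≠ t := by omega
    simp [hQn, this]
  have hQn1 : ∀ k y, IsProbVec (Qn k y) := by
    intro k y
    by_cases hk : k = t
    · rw [hk]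
      by_cases hy : y = x
      · simp [hQn, hy, hq]
      · simp [hQn, hy]; exact hP t y
    · simp only [hQn, if_neg hk]; exact h01 k y
  have hQn2 : ∀ k y, y ∉ U → y ∉ E → Wass hamming (Qn k y) (P k y) ≤ δ := by
    intro k y hyU hyE
    by_cases hk : k = t
    · rw [hk]
      by_cases hy : y = x
      · rw [hy]; simpa [hQn] using hW
      · simp only [hQn, if_pos rfl, if_neg hy]
        exact Wass_self_le (hP t y) hδ
    · simp only [hQn, if_neg hk]; exact h02 k y hyU hyE
  have hkey : hitProbAux U E Qn (n+1) t x = ∑ z, q z * hitProbAux U E Q₀ n (t+1) z := by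
    rw [hit_living U E Qn n t hxU hxE, hrow]
    refine Finset.sum_congr rfl fun z _ => ?_
    rw [hit_congr U E Qn Q₀ n (t+1) htail z]
  have hbd : ∀ z, (if z ∈ U then (1:ℝ) else if z ∈ E then 0 else rsA U E P δ n (t+1) z) - ε
      ≤ hitProbAux U E Q₀ n (t+1) z := by
    intro z
    by_cases hzU : z ∈ U
    · rw [if_pos hzU, hit_of_mem_U U E Q₀ n (t+1) hzU]; linarith
    by_cases hzE : z ∈ E
    · rw [if_neg hzU, if_pos hzE, hit_of_mem_E U E Q₀ n (t+1) hzU hzE]; linarith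
    · rw [if_neg hzU, if_neg hzE]
      have := h03 z
      linarith
  have hsum : ∑ z, q z * ((if z ∈ U then (1:ℝ) else if z ∈ E then 0
        else rsA U E P δ n (t+1) z) - ε) ≤ ∑ z, q z * hitProbAux U E Q₀ n (t+1) z :=
    Finset.sum_le_sum fun z _ => mul_le_mul_of_nonneg_left (hbd z) (hq.1 z)
  have hexp : ∑ z, q z * ((if z ∈ U then (1:ℝ) else if z ∈ E then 0
        else rsA U E P δ n (t+1) z) - ε)
      = (∑ z, q z * (if z ∈ U then (1:ℝ) else if z ∈ E then 0
        else rsA U E P δ n (t+1) z)) - ε := by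
    rw [Finset.sum_congr rfl (fun z _ => mul_sub (q z) _ ε), Finset.sum_sub_distrib,
      ← Finset.sum_mul, hq.2, one_mul]
  have hle : hitProbAux U E Qn (n+1) t x ≤ rsA U E P δ (n+1) t x :=
    hit_le_rsA hQn1 hQn2 (n+1) t x
  rw [hkey] at hle
  linarith [hexp ▸ hsum]

lemma weak_dual [Nonempty X] (hδ : 0 ≤ δ) {q p : X → ℝ} (hq : IsProbVec q)
    (hp : IsProbVec p) (hW : Wass hamming q p ≤ δ) {lam : ℝ} (hlam : 0 ≤ lam)
    (f : X → ℝ) :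
    ∑ z, q z * f z ≤ lam * δ +
      ∑ y, (Finset.univ.sup' Finset.univ_nonempty fun l => -lam * hamming l y + f l) * p y := by
  refine le_of_forall_pos_le_add ?_
  intro ε hε
  set g : X → ℝ := fun y => Finset.univ.sup' Finset.univ_nonempty
    (fun l => -lam * hamming l y + f l) with hg
  have hl1 : (0:ℝ) < lam + 1 := by linarith
  obtain ⟨Γ, hΓ, hcost⟩ := exists_coupling_cost_lt hq hp hW (show 0 < ε/(lam+1) by positivity)
  have key : ∀ y z : X, f y ≤ g z + lam * hamming y z := by
    intro y z
    have h1 : -lam * hamming y z + f y ≤ g z :=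
      Finset.le_sup' (fun l => -lam * hamming l z + f l) (Finset.mem_univ y)
    linarith
  have e1 : ∑ z, q z * f z = ∑ yz : X × X, Γ yz * f yz.1 := by
    rw [Fintype.sum_prod_type]
    refine Finset.sum_congr rfl fun y _ => ?_
    dsimp only
    rw [← Finset.sum_mul, hΓ.2.1 y]
  have e2 : ∑ yz : X × X, Γ yz * f yz.1
      ≤ ∑ yz : X × X, Γ yz * (g yz.2 + lam * hamming yz.1 yz.2) :=
    Finset.sum_le_sum fun yz _ => mul_le_mul_of_nonneg_left (key yz.1 yz.2) (hΓ.1 yz)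
  have e3 : ∑ yz : X × X, Γ yz * (g yz.2 + lam * hamming yz.1 yz.2)
      = (∑ yz : X × X, Γ yz * g yz.2) + lam * ∑ yz : X × X, Γ yz * hamming yz.1 yz.2 := by
    rw [Finset.mul_sum, ← Finset.sum_add_distrib]
    exact Finset.sum_congr rfl fun yz _ => by ring
  have e4 : ∑ yz : X × X, Γ yz * g yz.2 = ∑ y, g y * p y := by
    rw [Fintype.sum_prod_type_right]
    refine Finset.sum_congr rfl fun z _ => ?_
    dsimp only
    rw [← Finset.sum_mul, hΓ.2.2 z, mul_comm]
  have e5 : lam * ∑ yz : X × X, Γ yz * hamming yz.1 yz.2 ≤ lam * (δ + ε/(lam+1)) :=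
    mul_le_mul_of_nonneg_left hcost.le hlam
  have e6 : lam * (δ + ε/(lam+1)) ≤ lam * δ + ε := by
    have h7 : lam * (ε / (lam + 1)) ≤ ε := by
      have h8 : (0:ℝ) ≤ ε / (lam + 1) := by positivity
      have h9 : (lam + 1) * (ε / (lam + 1)) = ε := by field_simp
      nlinarith
    nlinarith
  linarith

lemma sum_ind_mul {c : ℝ} (xs : X) (f : X → ℝ) :
    ∑ z, (if z = xs then c else 0) * f z = c * f xs := by
  rw [Finset.sum_congr rfl (fun z _ => ite_mul (z = xs) c 0 (f z))]
  simp [Finset.sum_ite_eq']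

lemma strong_exists [Nonempty X] {p : X → ℝ} (hp : IsProbVec p) {δ : ℝ} (hδ : 0 ≤ δ)
    (f : X → ℝ) :
    ∃ lam : ℝ, 0 ≤ lam ∧ ∃ q : X → ℝ, IsProbVec q ∧ Wass hamming q p ≤ δ ∧
      lam * δ + ∑ y, (Finset.univ.sup' Finset.univ_nonempty
        fun l => -lam * hamming l y + f l) * p y = ∑ z, q z * f z := by
  classical
  obtain ⟨xs, _, hxs⟩ := Finset.exists_mem_eq_sup' (Finset.univ_nonempty (α := X)) f
  set M : ℝ := Finset.univ.sup' Finset.univ_nonempty f with hM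
  have hMge : ∀ l, f l ≤ M := fun l => Finset.le_sup' f (Finset.mem_univ l)
  by_cases hδ1 : 1 ≤ δ
  · -- move everything to the top state
    refine ⟨0, le_rfl, fun z => if z = xs then 1 else 0, ⟨?_, ?_⟩, ?_, ?_⟩
    · intro z; dsimp only; split <;> norm_num
    · simp
    · refine Wass_le_of_coupling
        (Γ := fun yz => (if yz.1 = xs then (1:ℝ) else 0) * p yz.2) ⟨?_, ?_, ?_⟩ ?_
      · intro yz; dsimp only
        exact mul_nonneg (by split <;> norm_num) (hp.1 _)
      · intro y; dsimp only
        by_cases hyx : y = xs <;> simp [hyx, hp.2]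
      · intro z; dsimp only
        rw [← Finset.sum_mul]
        simp [Finset.sum_ite_eq']
      · calc ∑ yz : X × X, (if yz.1 = xs then (1:ℝ) else 0) * p yz.2 * hamming yz.1 yz.2
            ≤ ∑ yz : X × X, (if yz.1 = xs then (1:ℝ) else 0) * p yz.2 := by
              refine Finset.sum_le_sum fun yz _ => ?_
              have h1 : 0 ≤ (if yz.1 = xs then (1:ℝ) else 0) * p yz.2 :=
                mul_nonneg (by split <;> norm_num) (hp.1 _)
              nlinarith [hamming_le_one yz.1 yz.2, hamming_nonneg yz.1 yz.2]
          _ = 1 := by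
              rw [Fintype.sum_prod_type]
              have : ∀ y : X, ∑ z, (if y = xs then (1:ℝ) else 0) * p z
                  = (if y = xs then (1:ℝ) else 0) := by
                intro y; rw [← Finset.mul_sum, hp.2, mul_one]
              rw [Finset.sum_congr rfl fun y _ => this y]
              simp [Finset.sum_ite_eq']
          _ ≤ δ := hδ1
    · have hg : ∀ y : X, (Finset.univ.sup' Finset.univ_nonempty
          fun l => -(0:ℝ) * hamming l y + f l) = M := by
        intro y
        refine le_antisymm (Finset.sup'_le _ _ fun l _ => ?_) ?_
        · have := hMge l; nlinarith [hamming_nonneg l y]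
        · have h1 := Finset.le_sup' (fun l => -(0:ℝ) * hamming l y + f l) (Finset.mem_univ xs)
          have h2 : -(0:ℝ) * hamming xs y + f xs = M := by rw [← hxs]; ring
          linarith
      dsimp only
      rw [Finset.sum_congr rfl fun y _ => by rw [hg y], ← Finset.mul_sum, hp.2,
        sum_ind_mul xs f, ← hxs]
      ring
  · push_neg at hδ1
    -- quantile construction
    set T : Finset ℝ := (Finset.univ.image f).filter
      (fun w => δ < ∑ z ∈ Finset.univ.filter (fun z => f z ≤ w), p z) with hT
    have hMT : M ∈ T := by
      rw [hT, Finset.mem_filter]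
      constructor
      · rw [hxs]; exact Finset.mem_image_of_mem f (Finset.mem_univ xs)
      · have : Finset.univ.filter (fun z => f z ≤ M) = Finset.univ := by
          refine Finset.filter_true_of_mem fun z _ => hMge z
        rw [this, hp.2]; exact hδ1
    have hTne : T.Nonempty := ⟨M, hMT⟩
    set v : ℝ := T.min' hTne with hv
    have hvT : v ∈ T := T.min'_mem hTne
    have hvM : v ≤ M := T.min'_le M hMT
    set m : ℝ := ∑ z ∈ Finset.univ.filter (fun z => f z < v), p z with hm
    set m' : ℝ := ∑ z ∈ Finset.univ.filter (fun z => f z ≤ v), p z with hm'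
    have hδm' : δ < m' := by
      have := (Finset.mem_filter.mp hvT).2
      exact this
    have hmδ : m ≤ δ := by
      by_contra hc
      push_neg at hc
      have hAne : (Finset.univ.filter (fun z => f z < v)).Nonempty := by
        rcases Finset.eq_empty_or_nonempty (Finset.univ.filter (fun z => f z < v)) with he | hne
        · rw [hm, he, Finset.sum_empty] at hc; linarith
        · exact hne
      obtain ⟨b, hb, hbsup⟩ := Finset.exists_mem_eq_sup' hAne f
      set w : ℝ := (Finset.univ.filter (fun z => f z < v)).sup' hAne f with hw
      have hwv : w < v := lt_of_le_of_lt (le_of_eq hbsup) (Finset.mem_filter.mp hb).2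
      have hsub : Finset.univ.filter (fun z => f z < v)
          ⊆ Finset.univ.filter (fun z => f z ≤ w) := by
        intro z hz
        have hz' := Finset.mem_filter.mp hz
        rw [Finset.mem_filter]
        exact ⟨hz'.1, Finset.le_sup' f hz⟩
      have hmono : m ≤ ∑ z ∈ Finset.univ.filter (fun z => f z ≤ w), p z :=
        Finset.sum_le_sum_of_subset_of_nonneg hsub (fun z _ _ => hp.1 z)
      have hwT : w ∈ T := by
        rw [hT, Finset.mem_filter]
        refine ⟨by rw [hbsup]; exact Finset.mem_image_of_mem f (Finset.mem_univ b), ?_⟩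
        linarith
      have := T.min'_le w hwT
      linarith
    have hmm' : m < m' := lt_of_le_of_lt hmδ hδm'
    set θ : ℝ := (δ - m) / (m' - m) with hθ
    have hθ0 : 0 ≤ θ := div_nonneg (by linarith) (by linarith)
    have hθ1 : θ ≤ 1 := (div_le_one (by linarith)).2 (by linarith)
    set r : X → ℝ := fun z => if f z < v then p z else if f z = v then θ * p z else 0 with hr
    have hr0 : ∀ z, 0 ≤ r z := by
      intro z; rw [hr]; dsimp only
      split
      · exact hp.1 z
      split
      · exact mul_nonneg hθ0 (hp.1 z)
      · exact le_refl 0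
    have hrp : ∀ z, r z ≤ p z := by
      intro z; rw [hr]; dsimp only
      split
      · exact le_refl _
      split
      · nlinarith [hp.1 z]
      · exact hp.1 z
    have hsplit : m' = m + ∑ z ∈ Finset.univ.filter (fun z => f z = v), p z := by
      rw [hm', hm]
      rw [show Finset.univ.filter (fun z => f z ≤ v)
          = Finset.univ.filter (fun z => f z < v) ∪ Finset.univ.filter (fun z => f z = v) by
        ext z; simp [Finset.mem_filter, Finset.mem_union, le_iff_lt_or_eq]]
      rw [Finset.sum_union]
      rw [Finset.disjoint_left]
      intro z hz1 hz2
      rw [Finset.mem_filter] at hz1 hz2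
      exact absurd hz2.2 (ne_of_lt hz1.2)
    have hrsum : ∑ z, r z = δ := by
      have hpt : ∀ z, r z = (if f z < v then p z else 0) + (if f z = v then θ * p z else 0) := by
        intro z
        rcases lt_trichotomy (f z) v with h | h | h
        · rw [hr]; simp [h, ne_of_lt h]
        · rw [hr]; simp [h]
        · rw [hr]; simp [not_lt.2 h.le, ne_of_gt h, asymm h]
      rw [Finset.sum_congr rfl fun z _ => hpt z, Finset.sum_add_distrib]
      rw [← Finset.sum_filter, ← Finset.sum_filter, ← Finset.mul_sum]
      have h2 : ∑ z ∈ Finset.univ.filter (fun z => f z = v), p z = m' - m := by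
        rw [hsplit]; ring
      rw [h2, hθ]
      have h3 : (δ - m) / (m' - m) * (m' - m) = δ - m :=
        div_mul_cancel₀ _ (by linarith : m' - m ≠ 0)
      rw [h3, ← hm]
      ring
    set q : X → ℝ := fun z => p z - r z + (if z = xs then δ else 0) with hq
    have hq1 : IsProbVec q := by
      constructor
      · intro z; rw [hq]; dsimp only
        have h1 := hrp z
        split <;> [linarith; linarith]
      · rw [hq]
        rw [Finset.sum_add_distrib, Finset.sum_sub_distrib, hp.2, hrsum]
        simp [Finset.sum_ite_eq']
    have hqW : Wass hamming q p ≤ δ := by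
      refine Wass_le_of_coupling
        (Γ := fun yz => (p yz.2 - r yz.2) * (if yz.1 = yz.2 then 1 else 0)
          + r yz.2 * (if yz.1 = xs then 1 else 0)) ⟨?_, ?_, ?_⟩ ?_
      · intro yz; dsimp only
        have h1 := hrp yz.2
        have h2 := hr0 yz.2
        have h3 : (0:ℝ) ≤ (if yz.1 = yz.2 then (1:ℝ) else 0) := by split <;> norm_num
        have h4 : (0:ℝ) ≤ (if yz.1 = xs then (1:ℝ) else 0) := by split <;> norm_num
        nlinarith
      · intro y; dsimp only
        rw [Finset.sum_add_distrib]
        have h1 : ∑ z, (p z - r z) * (if y = z then (1:ℝ) else 0) = p y - r y := by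
          rw [Finset.sum_congr rfl fun z _ => mul_ite (y = z) (p z - r z) 1 0]
          simp [Finset.sum_ite_eq]
        have h2 : ∑ z, r z * (if y = xs then (1:ℝ) else 0)
            = (if y = xs then δ else 0) := by
          rw [← Finset.sum_mul, hrsum]
          split <;> ring
        rw [h1, h2, hq]
      · intro z; dsimp only
        rw [Finset.sum_add_distrib]
        have h1 : ∑ y, (p z - r z) * (if y = z then (1:ℝ) else 0) = p z - r z := by
          rw [Finset.sum_congr rfl fun y _ => mul_ite (y = z) (p z - r z) 1 0]
          simp [Finset.sum_ite_eq']
        have h2 : ∑ y, r z * (if y = xs then (1:ℝ) else 0) = r z := by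
          rw [Finset.sum_congr rfl fun y _ => mul_ite (y = xs) (r z) 1 0]
          simp [Finset.sum_ite_eq']
        rw [h1, h2]; ring
      · have hterm : ∀ yz : X × X,
            ((p yz.2 - r yz.2) * (if yz.1 = yz.2 then (1:ℝ) else 0)
              + r yz.2 * (if yz.1 = xs then 1 else 0)) * hamming yz.1 yz.2
            ≤ r yz.2 * (if yz.1 = xs then 1 else 0) := by
          rintro ⟨y, z⟩; dsimp only
          by_cases hyz : y = z
          · rw [if_pos hyz, hyz, hamming_self, mul_zero]
            have := hr0 z
            split <;> nlinarith
          · rw [if_neg hyz]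
            have h1 := hamming_le_one y z
            have h2 := hamming_nonneg y z
            have h3 := hr0 z
            split <;> nlinarith
        calc ∑ yz : X × X, ((p yz.2 - r yz.2) * (if yz.1 = yz.2 then (1:ℝ) else 0)
              + r yz.2 * (if yz.1 = xs then 1 else 0)) * hamming yz.1 yz.2
            ≤ ∑ yz : X × X, r yz.2 * (if yz.1 = xs then (1:ℝ) else 0) :=
              Finset.sum_le_sum fun yz _ => hterm yz
          _ = δ := by
              rw [Fintype.sum_prod_type]
              have h1 : ∀ y : X, ∑ z, r z * (if y = xs then (1:ℝ) else 0)
                  = (if y = xs then δ else 0) := by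
                intro y
                rw [← Finset.sum_mul, hrsum]
                split <;> ring
              rw [Finset.sum_congr rfl fun y _ => h1 y]
              simp [Finset.sum_ite_eq']
    set lam : ℝ := M - v with hlam
    have hlam0 : 0 ≤ lam := by rw [hlam]; linarith
    refine ⟨lam, hlam0, q, hq1, hqW, ?_⟩
    -- value identity
    have hg : ∀ y : X, (Finset.univ.sup' Finset.univ_nonempty
        fun l => -lam * hamming l y + f l) = max (f y) v := by
      intro y
      refine le_antisymm (Finset.sup'_le _ _ fun l _ => ?_) ?_
      · by_cases hl : l = y
        · rw [hl, hamming_self]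
          have := le_max_left (f y) v
          linarith
        · have h1 : hamming l y = 1 := by rw [hamming, if_neg hl]
          rw [h1]
          have h2 := hMge l
          have h3 := le_max_right (f y) v
          rw [hlam] at *
          linarith
      · refine max_le ?_ ?_
        · have h1 := Finset.le_sup' (fun l => -lam * hamming l y + f l) (Finset.mem_univ y)
          rw [hamming_self] at h1
          linarith [h1]
        · have h1 := Finset.le_sup' (fun l => -lam * hamming l y + f l) (Finset.mem_univ xs)
          have h2 : v ≤ -lam * hamming xs y + f xs := by
            have h3 := hamming_le_one xs y
            have h4 := hamming_nonneg xs y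
            rw [← hxs] at *
            rw [hlam] at *
            nlinarith
          linarith
    have hI : ∀ z, (max (f z) v - f z) * p z + r z * f z = v * r z := by
      intro z
      rcases lt_trichotomy (f z) v with h | h | h
      · rw [max_eq_right h.le, hr]
        simp only [if_pos h]
        ring
      · rw [max_eq_left h.ge, hr]
        simp only [if_neg (not_lt.2 h.ge), if_pos h]
        rw [h]; ring
      · rw [max_eq_left h.le, hr]
        simp only [if_neg (not_lt.2 h.le), if_neg (ne_of_gt h)]
        ring
    have hIsum : (∑ z, (max (f z) v) * p z) - (∑ z, f z * p z) + (∑ z, r z * f z)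
        = v * δ := by
      have h1 : ∑ z, ((max (f z) v - f z) * p z + r z * f z) = ∑ z, v * r z :=
        Finset.sum_congr rfl fun z _ => hI z
      rw [Finset.sum_add_distrib] at h1
      rw [Finset.sum_congr rfl (fun z _ => sub_mul (max (f z) v) (f z) (p z)),
        Finset.sum_sub_distrib, ← Finset.mul_sum, hrsum] at h1
      linarith [h1]
    have hqsum : ∑ z, q z * f z
        = (∑ z, f z * p z) - (∑ z, r z * f z) + δ * M := by
      rw [hq]
      have h1 : ∀ z, (p z - r z + (if z = xs then δ else 0)) * f z
          = f z * p z - r z * f z + (if z = xs then δ else 0) * f z := by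
        intro z; ring
      rw [Finset.sum_congr rfl fun z _ => h1 z, Finset.sum_add_distrib,
        Finset.sum_sub_distrib, sum_ind_mul xs f, ← hxs]
    rw [Finset.sum_congr rfl fun y _ => by rw [hg y]]
    rw [hqsum, hlam]
    linarith [hIsum]
  
end RSDual

open RSDual in
/-- Dual form of the robust safety function recursion (Lemma 4). -/
theorem robust_safety_dual_recursion
    {X : Type*} [Fintype X] [DecidableEq X] [Nonempty X]
    (U E : Finset X) (hUE : Disjoint U E)
    (Tmax : ℕ) (P : ℕ → X → X → ℝ) (hP : ∀ k y, IsProbVec (P k y))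
    (δ : ℝ) (hδ : 0 ≤ δ)
    (t : ℕ) (ht : t < Tmax) (x : X) (hxU : x ∉ U) (hxE : x ∉ E) :
    robustSafety U E P δ Tmax t x =
      sInf {s | ∃ lam : ℝ, 0 ≤ lam ∧
        s = lam * δ +
          ∑ y, (Finset.univ.sup' Finset.univ_nonempty fun l =>
              -lam * hamming l y + (if l ∈ U then (1 : ℝ) else 0) +
                (if l ∈ U ∨ l ∈ E then 0 else robustSafety U E P δ Tmax (t + 1) l)) *
            P t x y} := by
  classical
  set n : ℕ := Tmax - t - 1 with hn
  have hTn : Tmax - t = n + 1 := by omega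
  have hTn' : Tmax - (t + 1) = n := by omega
  set f : X → ℝ :=
    fun z => if z ∈ U then 1 else if z ∈ E then 0 else rsA U E P δ n (t+1) z with hf
  have hfl : ∀ (lam : ℝ) (l y : X),
      -lam * hamming l y + (if l ∈ U then (1:ℝ) else 0) +
        (if l ∈ U ∨ l ∈ E then 0 else robustSafety U E P δ Tmax (t + 1) l)
      = -lam * hamming l y + f l := by
    intro lam l y
    rw [hf]; dsimp only
    by_cases hlU : l ∈ U
    · simp [hlU]
    by_cases hlE : l ∈ E
    · simp [hlU, hlE]
    · simp only [if_neg hlU, if_neg hlE, if_neg (by tauto : ¬(l ∈ U ∨ l ∈ E))]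
      rw [show robustSafety U E P δ Tmax (t+1) l
          = rsA U E P δ (Tmax - (t+1)) (t+1) l from rfl, hTn']
      ring
  have hsup : ∀ (lam : ℝ) (y : X),
      (Finset.univ.sup' Finset.univ_nonempty fun l =>
        -lam * hamming l y + (if l ∈ U then (1:ℝ) else 0) +
          (if l ∈ U ∨ l ∈ E then 0 else robustSafety U E P δ Tmax (t + 1) l))
      = Finset.univ.sup' Finset.univ_nonempty fun l => -lam * hamming l y + f l := by
    intro lam y
    exact Finset.sup'_congr Finset.univ_nonempty rfl fun l _ => hfl lam l y
  have hsumeq : ∀ lam : ℝ,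
      ∑ y, (Finset.univ.sup' Finset.univ_nonempty fun l =>
        -lam * hamming l y + (if l ∈ U then (1:ℝ) else 0) +
          (if l ∈ U ∨ l ∈ E then 0 else robustSafety U E P δ Tmax (t + 1) l)) * P t x y
      = ∑ y, (Finset.univ.sup' Finset.univ_nonempty
          fun l => -lam * hamming l y + f l) * P t x y :=
    fun lam => Finset.sum_congr rfl fun y _ => by rw [hsup lam y]
  have hsets : {s : ℝ | ∃ lam : ℝ, 0 ≤ lam ∧
        s = lam * δ +
          ∑ y, (Finset.univ.sup' Finset.univ_nonempty fun l =>
              -lam * hamming l y + (if l ∈ U then (1 : ℝ) else 0) +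
                (if l ∈ U ∨ l ∈ E then 0 else robustSafety U E P δ Tmax (t + 1) l)) *
            P t x y}
      = {s : ℝ | ∃ lam : ℝ, 0 ≤ lam ∧
        s = lam * δ + ∑ y, (Finset.univ.sup' Finset.univ_nonempty
          fun l => -lam * hamming l y + f l) * P t x y} := by
    refine Set.ext fun s => exists_congr fun lam => and_congr_right fun _ => ?_
    rw [hsumeq lam]
  rw [show robustSafety U E P δ Tmax t x = rsA U E P δ (Tmax - t) t x from rfl, hTn, hsets]
  have hf0 : ∀ z, 0 ≤ f z := by
    intro z; rw [hf]; dsimp only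
    split
    · norm_num
    split
    · norm_num
    · exact rsA_nonneg hP hδ n (t+1) z
  refine le_antisymm ?_ ?_
  · -- weak duality
    refine le_csInf ⟨_, 0, le_rfl, rfl⟩ ?_
    rintro d ⟨lam, hlam, rfl⟩
    refine csSup_le ⟨_, P, hP, fun k y _ _ => Wass_self_le (hP k y) hδ, rfl⟩ ?_
    rintro s ⟨Q, hQ1, hQ2, rfl⟩
    have hx1 : hitProbAux U E Q (n+1) t x
        = ∑ z, Q t x z * hitProbAux U E Q n (t+1) z := hit_living U E Q n t hxU hxE
    have hx2 : ∀ z, hitProbAux U E Q n (t+1) z ≤ f z := by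
      intro z; rw [hf]; dsimp only
      by_cases hzU : z ∈ U
      · rw [if_pos hzU, hit_of_mem_U U E Q n (t+1) hzU]
      by_cases hzE : z ∈ E
      · rw [if_neg hzU, if_pos hzE, hit_of_mem_E U E Q n (t+1) hzU hzE]
      · rw [if_neg hzU, if_neg hzE]
        exact hit_le_rsA hQ1 hQ2 n (t+1) z
    have hx3 : ∑ z, Q t x z * hitProbAux U E Q n (t+1) z ≤ ∑ z, Q t x z * f z :=
      Finset.sum_le_sum fun z _ => mul_le_mul_of_nonneg_left (hx2 z) ((hQ1 t x).1 z)
    have hx4 := weak_dual hδ (hQ1 t x) (hP t x) (hQ2 t x hxU hxE) hlam f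
    rw [hx1]
    linarith
  · -- strong duality
    obtain ⟨lam, hlam, q, hq1, hqW, hval⟩ := strong_exists (hP t x) hδ f
    have hbdd : BddBelow {s : ℝ | ∃ lam : ℝ, 0 ≤ lam ∧
        s = lam * δ + ∑ y, (Finset.univ.sup' Finset.univ_nonempty
          fun l => -lam * hamming l y + f l) * P t x y} := by
      refine ⟨0, ?_⟩
      rintro d ⟨lam', hlam', rfl⟩
      have hg0 : ∀ y, 0 ≤ Finset.univ.sup' Finset.univ_nonempty
          (fun l => -lam' * hamming l y + f l) := by
        intro y
        have h := Finset.le_sup' (fun l => -lam' * hamming l y + f l) (Finset.mem_univ y)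
        rw [hamming_self, mul_zero] at h
        have := hf0 y
        linarith
      have h1 : 0 ≤ ∑ y, (Finset.univ.sup' Finset.univ_nonempty
          (fun l => -lam' * hamming l y + f l)) * P t x y :=
        Finset.sum_nonneg fun y _ => mul_nonneg (hg0 y) ((hP t x).1 y)
      nlinarith
    refine le_trans (csInf_le hbdd ⟨lam, hlam, rfl⟩) ?_
    have h3 : ∑ z, q z * f z ≤ rsA U E P δ (n+1) t x := by
      have := rowB hP hδ hUE n t hxU hxE hq1 hqW
      simp only [hf]
      exact this
    linarith
end
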